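/- arXiv:1602.04967 — 4 statements merged into one kernel-verified Lean document; each statement's English description precedes it below -/
import Mathlib

section
/- Let A be a finite set of odd cardinality with |A| ≥ 3, and let n ≥ 4. Then the full symmetric group Sym(A^n) is exactly the subgroup of Sym(A^n) generated by all extensions to arity n of permutations of A^4. -/
/-- The wire permutation `π_α` of `A^n` induced by `α ∈ S_n`: `π_α(x) i = x (α⁻¹ i)`. -/
def wirePerm {A : Type*} {n : ℕ} (α : Equiv.Perm (Fin n)) : Equiv.Perm (Fin n → A) :=
  Equiv.arrowCongr α (Equiv.refl A)

/-- Splitting `A^(k+ℓ)` into `A^k × A^ℓ`. -/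
def splitEquiv (A : Type*) (k ℓ : ℕ) : (Fin (k + ℓ) → A) ≃ (Fin k → A) × (Fin ℓ → A) :=
  (Equiv.arrowCongr finSumFinEquiv.symm (Equiv.refl A)).trans
    (Equiv.sumArrowEquivProdArrow _ _ A)

/-- `f ⊕ id`: the permutation of `A^n` acting as `f` on the first `ℓ` coordinates and
fixing the remaining ones. -/
def oplusId {A : Type*} {ℓ n : ℕ} (h : ℓ ≤ n) (f : Equiv.Perm (Fin ℓ → A)) :
    Equiv.Perm (Fin n → A) :=
  (((Equiv.arrowCongr (finCongr (Nat.add_sub_cancel' h).symm) (Equiv.refl A)).trans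
    (splitEquiv A ℓ (n - ℓ))).symm).permCongr
      (Equiv.prodCongr f (Equiv.refl (Fin (n - ℓ) → A)))

/-- `g ∈ Sym(A^n)` is an extension of `f ∈ Sym(A^ℓ)` iff it is a conjugate of `f ⊕ id`
by a wire permutation. -/
def IsExtensionOf {A : Type*} {ℓ n : ℕ} (f : Equiv.Perm (Fin ℓ → A))
    (g : Equiv.Perm (Fin n → A)) : Prop :=
  ∃ (h : ℓ ≤ n) (α : Equiv.Perm (Fin n)),
    g = wirePerm α * oplusId h f * (wirePerm α)⁻¹

open Equiv Function
set_option linter.unusedSectionVars false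

section Helpers

/-- Extend a pair of injections to a permutation. -/
lemma exists_perm_comp {γ β : Type*} [Fintype γ] [Fintype β] [DecidableEq β]
    {u v : γ → β} (hu : Function.Injective u) (hv : Function.Injective v) :
    ∃ π : Equiv.Perm β, ∀ i, π (u i) = v i := by
  classical
  let e₀ : Set.range u ≃ Set.range v :=
    (Equiv.ofInjective u hu).symm.trans (Equiv.ofInjective v hv)
  have hcard : Fintype.card ((Set.range u)ᶜ : Set β) =
      Fintype.card ((Set.range v)ᶜ : Set β) := by
    rw [Fintype.card_compl_set, Fintype.card_compl_set,
      Set.card_range_of_injective hu, Set.card_range_of_injective hv]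
  let e₁ : ((Set.range u)ᶜ : Set β) ≃ ((Set.range v)ᶜ : Set β) :=
    Fintype.equivOfCardEq hcard
  obtain ⟨e, he⟩ := (Equiv.Set.compl e₀).symm e₁
  refine ⟨e, fun i => ?_⟩
  have := he ⟨u i, Set.mem_range_self i⟩
  simp only [e₀] at this
  rw [this]
  have h2 : (Equiv.ofInjective u hu).symm ⟨u i, Set.mem_range_self i⟩ = i := by
    rw [Equiv.symm_apply_eq, Equiv.ofInjective_apply]
  simp [h2]

lemma oplusId_cast_lt {A : Type*} {ℓ n : ℕ} (h : ℓ ≤ n) (f : Equiv.Perm (Fin ℓ → A))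
    (x : Fin n → A) (j4 : Fin ℓ) :
    oplusId h f x (Fin.cast (Nat.add_sub_cancel' h) (Fin.castAdd (n - ℓ) j4)) =
      f (fun k => x (Fin.castLE h k)) j4 := by
  simp [oplusId, splitEquiv, Equiv.sumArrowEquivProdArrow, Equiv.arrowCongr,
    Equiv.permCongr, Fin.castLE, Fin.cast]
  have : (⟨(j4:ℕ), by omega⟩ : Fin (ℓ + (n - ℓ))) = Fin.castAdd (n - ℓ) j4 := rfl
  rw [this, finSumFinEquiv_symm_apply_castAdd, Sum.elim_inl]
  congr 1

lemma oplusId_cast_ge {A : Type*} {ℓ n : ℕ} (h : ℓ ≤ n) (f : Equiv.Perm (Fin ℓ → A))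
    (x : Fin n → A) (j4 : Fin (n - ℓ)) :
    oplusId h f x (Fin.cast (Nat.add_sub_cancel' h) (Fin.natAdd ℓ j4)) =
      x (Fin.cast (Nat.add_sub_cancel' h) (Fin.natAdd ℓ j4)) := by
  simp [oplusId, splitEquiv, Equiv.sumArrowEquivProdArrow, Equiv.permCongr_apply]

lemma oplusId_apply_lt {A : Type*} {ℓ n : ℕ} (h : ℓ ≤ n) (f : Equiv.Perm (Fin ℓ → A))
    (x : Fin n → A) (j : Fin n) (hj : (j : ℕ) < ℓ) :
    oplusId h f x j = f (fun k => x (Fin.castLE h k)) ⟨(j : ℕ), hj⟩ := by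
  have hjj : j = Fin.cast (Nat.add_sub_cancel' h) (Fin.castAdd (n - ℓ) ⟨(j:ℕ), hj⟩) := by
    ext; simp
  conv_lhs => rw [hjj]
  exact oplusId_cast_lt h f x ⟨(j:ℕ), hj⟩

lemma oplusId_apply_ge {A : Type*} {ℓ n : ℕ} (h : ℓ ≤ n) (f : Equiv.Perm (Fin ℓ → A))
    (x : Fin n → A) (j : Fin n) (hj : ℓ ≤ (j : ℕ)) :
    oplusId h f x j = x j := by
  have hjj : j = Fin.cast (Nat.add_sub_cancel' h) (Fin.natAdd ℓ ⟨(j:ℕ) - ℓ, by omega⟩) := by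
    ext; simp; omega
  conv_lhs => rw [hjj]
  rw [oplusId_cast_ge, ← hjj]

lemma wirePerm_apply {A : Type*} {n : ℕ} (α : Equiv.Perm (Fin n)) (x : Fin n → A) (j : Fin n) :
    wirePerm (A := A) α x j = x (α.symm j) := rfl

lemma wirePerm_inv_apply {A : Type*} {n : ℕ} (α : Equiv.Perm (Fin n)) (x : Fin n → A)
    (j : Fin n) : (wirePerm (A := A) α)⁻¹ x j = x (α j) := by
  show ((wirePerm (A := A) α).symm x) j = x (α j)
  simp [wirePerm, Equiv.arrowCongr_symm]

end Helpers

section Gate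

variable {A : Type*} [DecidableEq A] [Fintype A] {n : ℕ}

lemma exists_extending (hn : 4 ≤ n) {ι : Fin 4 → Fin n} (hι : Function.Injective ι) :
    ∃ α : Equiv.Perm (Fin n), ∀ k : Fin 4, α (Fin.castLE hn k) = ι k :=
  exists_perm_comp (Fin.castLE_injective hn) hι

/-- A permutation of `Fin n` extending `ι` on the first four coordinates. -/
noncomputable def extPerm (hn : 4 ≤ n) {ι : Fin 4 → Fin n} (hι : Function.Injective ι) :
    Equiv.Perm (Fin n) := Classical.choose (exists_extending hn hι)

lemma extPerm_spec (hn : 4 ≤ n) {ι : Fin 4 → Fin n} (hι : Function.Injective ι) (k : Fin 4) :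
    extPerm hn hι (Fin.castLE hn k) = ι k := Classical.choose_spec (exists_extending hn hι) k

/-- The gate acting via `f` on the wires `ι 0, ι 1, ι 2, ι 3` of `A^n`. -/
noncomputable def gatePerm (hn : 4 ≤ n) {ι : Fin 4 → Fin n} (hι : Function.Injective ι)
    (f : Equiv.Perm (Fin 4 → A)) : Equiv.Perm (Fin n → A) :=
  wirePerm (extPerm hn hι) * oplusId hn f * (wirePerm (extPerm hn hι))⁻¹

lemma gatePerm_isExtensionOf (hn : 4 ≤ n) {ι : Fin 4 → Fin n} (hι : Function.Injective ι)
    (f : Equiv.Perm (Fin 4 → A)) : IsExtensionOf f (gatePerm hn hι f) :=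
  ⟨hn, extPerm hn hι, rfl⟩

lemma gatePerm_apply_img (hn : 4 ≤ n) {ι : Fin 4 → Fin n} (hι : Function.Injective ι)
    (f : Equiv.Perm (Fin 4 → A)) (x : Fin n → A) (k : Fin 4) :
    gatePerm hn hι f x (ι k) = f (x ∘ ι) k := by
  set α := extPerm hn hι with hα
  have hsymm : α.symm (ι k) = Fin.castLE hn k := by
    rw [Equiv.symm_apply_eq, extPerm_spec]
  show wirePerm α (oplusId hn f ((wirePerm α)⁻¹ x)) (ι k) = _
  rw [wirePerm_apply, hsymm, oplusId_apply_lt (hj := by simpa using k.isLt)]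
  have e1 : (fun k' => (wirePerm α)⁻¹ x (Fin.castLE hn k')) = x ∘ ι := by
    funext k'
    rw [wirePerm_inv_apply, extPerm_spec]
    rfl
  rw [e1]
  congr

lemma gatePerm_apply_ne (hn : 4 ≤ n) {ι : Fin 4 → Fin n} (hι : Function.Injective ι)
    (f : Equiv.Perm (Fin 4 → A)) (x : Fin n → A) (j : Fin n) (hj : ∀ k, ι k ≠ j) :
    gatePerm hn hι f x j = x j := by
  set α := extPerm hn hι with hα
  have hge : 4 ≤ ((α.symm j : Fin n) : ℕ) := by
    by_contra hlt
    push_neg at hlt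
    have : α (Fin.castLE hn ⟨(α.symm j : ℕ), hlt⟩) = j := by
      have : Fin.castLE hn ⟨((α.symm j : Fin n) : ℕ), hlt⟩ = α.symm j := by ext; simp
      rw [this]; simp
    rw [extPerm_spec] at this
    exact hj _ this
  show wirePerm α (oplusId hn f ((wirePerm α)⁻¹ x)) j = _
  rw [wirePerm_apply, oplusId_apply_ge (hj := hge), wirePerm_inv_apply]
  simp

end Gate


section PGate
variable {A : Type*} {N : ℕ} [DecidableEq (Fin N)]

open Classical in
/-- A "conditional gate": applies `τ` to coordinate `t` when condition `C` holds. -/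
noncomputable def pgate (C : (Fin N → A) → Prop) (t : Fin N)
    (hC : ∀ x v, C (Function.update x t v) ↔ C x) (τ : Equiv.Perm A) :
    Equiv.Perm (Fin N → A) where
  toFun x := if C x then Function.update x t (τ (x t)) else x
  invFun x := if C x then Function.update x t (τ⁻¹ (x t)) else x
  left_inv x := by
    by_cases h : C x
    · have h2 : C (Function.update x t (τ (x t))) := (hC x _).mpr h
      simp [h, h2]
    · simp [h]
  right_inv x := by
    by_cases h : C x
    · have h2 : C (Function.update x t (τ.symm (x t))) := (hC x _).mpr h
      simp [h, h2]
    · simp [h]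

variable {C C' : (Fin N → A) → Prop} {t : Fin N}
  {hC : ∀ x v, C (Function.update x t v) ↔ C x}
  {hC' : ∀ x v, C' (Function.update x t v) ↔ C' x} {τ σ : Equiv.Perm A}

lemma pgate_apply_pos (x : Fin N → A) (h : C x) :
    pgate C t hC τ x = Function.update x t (τ (x t)) := by simp [pgate, h]

lemma pgate_apply_neg (x : Fin N → A) (h : ¬ C x) : pgate C t hC τ x = x := by simp [pgate, h]

lemma pgate_inv : (pgate C t hC τ)⁻¹ = pgate C t hC τ⁻¹ := rfl

lemma pgate_congr (h : ∀ x, C x ↔ C' x) : pgate C t hC τ = pgate C' t hC' τ := by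
  have hCC : C = C' := funext fun x => propext (h x)
  subst hCC
  rfl

lemma pgate_one : pgate C t hC 1 = 1 := by
  ext x j
  by_cases h : C x <;> simp [pgate_apply_pos, pgate_apply_neg, h, Function.update_apply]
  · intro hj; subst hj; rfl

lemma pgate_mul : pgate C t hC (τ * σ) = pgate C t hC τ * pgate C t hC σ := by
  ext x j
  by_cases h : C x
  · have h2 : C (Function.update x t (σ (x t))) := (hC x _).mpr h
    simp [pgate_apply_pos, h, h2, Function.update_apply]
    by_cases hj : j = t <;> simp [hj]
  · simp [pgate_apply_neg, h]

lemma pgate_pow (m : ℕ) : pgate C t hC (τ ^ m) = (pgate C t hC τ) ^ m := by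
  induction m with
  | zero => simpa using pgate_one
  | succ k ih => rw [pow_succ, pow_succ, pgate_mul, ih]

lemma pgate_commute (hτσ : Commute τ σ) :
    Commute (pgate C t hC τ) (pgate C' t hC' σ) := by
  unfold Commute SemiconjBy
  ext x j
  by_cases h : C x <;> by_cases h' : C' x
  · have a1 : C' (Function.update x t (τ (x t))) := (hC' x _).mpr h'
    have a2 : C (Function.update x t (σ (x t))) := (hC x _).mpr h
    simp [Equiv.Perm.mul_apply, pgate_apply_pos, h, h', a1, a2, Function.update_apply]
    by_cases hj : j = t <;> simp [hj]
    have := DFunLike.congr_fun hτσ.eq (x t)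
    simpa using this
  · have a2 : C (Function.update x t (σ (x t))) := (hC x _).mpr h
    have a1 : ¬ C' (Function.update x t (τ (x t))) := fun hh => h' ((hC' x _).mp hh)
    simp [Equiv.Perm.mul_apply, pgate_apply_pos, pgate_apply_neg, h, h', a1, a2]
  · have a1 : C' (Function.update x t (τ (x t))) := (hC' x _).mpr h'
    have a2 : ¬ C (Function.update x t (σ (x t))) := fun hh => h ((hC x _).mp hh)
    simp [Equiv.Perm.mul_apply, pgate_apply_pos, pgate_apply_neg, h, h', a1, a2]
  · simp [Equiv.Perm.mul_apply, pgate_apply_neg, h, h']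

end PGate

section Comm
variable {A : Type*} {N : ℕ}

lemma pgate_commutator {C : (Fin N → A) → Prop} {s t : Fin N} (hst : s ≠ t)
    (hCs : ∀ x v, C (Function.update x s v) ↔ C x)
    (hCt : ∀ x v, C (Function.update x t v) ↔ C x)
    (β τ : Equiv.Perm A) (b : A) (hb : β b ≠ b)
    (hbt : ∀ (x : Fin N → A) v, (Function.update x t v) s = b ↔ x s = b)
    (h1 : ∀ (x : Fin N → A) v, (C (Function.update x t v) ∧ (Function.update x t v) s = β b)
      ↔ (C x ∧ x s = β b))
    (h2 : ∀ (x : Fin N → A) v, (C (Function.update x t v) ∧ (Function.update x t v) s = b)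
      ↔ (C x ∧ x s = b)) :
    pgate C s hCs β * pgate (fun x => x s = b) t hbt τ * (pgate C s hCs β)⁻¹ *
      (pgate (fun x => x s = b) t hbt τ)⁻¹ =
    pgate (fun x => C x ∧ x s = β b) t h1 τ *
      pgate (fun x => C x ∧ x s = b) t h2 τ⁻¹ := by
  ext x : 1
  simp only [Equiv.Perm.mul_apply, pgate_inv]
  by_cases hCx : C x
  · by_cases hxb : x s = b
    · have hxβb : ¬ (x s = β b) := by rw [hxb]; exact fun h => hb h.symm
      have e1 : pgate (fun x => x s = b) t hbt τ⁻¹ x = Function.update x t (τ⁻¹ (x t)) :=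
        pgate_apply_pos x hxb
      set y := Function.update x t (τ⁻¹ (x t)) with hy
      have hys : y s = x s := Function.update_of_ne hst _ _
      have hCy : C y := (hCt x _).mpr hCx
      have e2 : pgate C s hCs β⁻¹ y = Function.update y s (β⁻¹ (y s)) :=
        pgate_apply_pos y hCy
      set z := Function.update y s (β⁻¹ (y s)) with hz
      have hzs : z s = β⁻¹ (x s) := by rw [hz, Function.update_self, hys]
      have hzb : ¬ (z s = b) := by
        rw [hzs, hxb]
        intro hh
        have h3 := congrArg β hh
        simp at h3
        exact hb h3.symm
      have e3 : pgate (fun x => x s = b) t hbt τ z = z := pgate_apply_neg z hzb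
      have hCz : C z := (hCs y _).mpr hCy
      have e4 : pgate C s hCs β z = Function.update z s (β (z s)) := pgate_apply_pos z hCz
      rw [e1, e2, e3, e4]
      have r2 : pgate (fun x => C x ∧ x s = b) t h2 τ⁻¹ x = y := pgate_apply_pos x ⟨hCx, hxb⟩
      have r1 : pgate (fun x => C x ∧ x s = β b) t h1 τ y = y :=
        pgate_apply_neg y (fun hh => hxβb (by rw [← hys]; exact hh.2))
      rw [r2, r1, hzs, hxb, (by simp : β (β⁻¹ b) = b), hz, Function.update_idem]
      have hby : b = y s := by rw [hys, hxb]
      rw [hby, Function.update_eq_self]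
    · by_cases hxβb : x s = β b
      · have e1 : pgate (fun x => x s = b) t hbt τ⁻¹ x = x := pgate_apply_neg x hxb
        have e2 : pgate C s hCs β⁻¹ x = Function.update x s (β⁻¹ (x s)) :=
          pgate_apply_pos x hCx
        set z := Function.update x s (β⁻¹ (x s)) with hz
        have hzs : z s = b := by rw [hz, Function.update_self, hxβb]; simp
        have e3 : pgate (fun x => x s = b) t hbt τ z = Function.update z t (τ (z t)) :=
          pgate_apply_pos z hzs
        set w := Function.update z t (τ (z t)) with hw
        have hCz : C z := (hCs x _).mpr hCx
        have hCw : C w := (hCt z _).mpr hCz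
        have hws : w s = b := by rw [hw, Function.update_of_ne hst, hzs]
        have e4 : pgate C s hCs β w = Function.update w s (β (w s)) := pgate_apply_pos w hCw
        rw [e1, e2, e3, e4]
        have r2 : pgate (fun x => C x ∧ x s = b) t h2 τ⁻¹ x = x :=
          pgate_apply_neg x (fun hh => hxb hh.2)
        have r1 : pgate (fun x => C x ∧ x s = β b) t h1 τ x =
            Function.update x t (τ (x t)) := pgate_apply_pos x ⟨hCx, hxβb⟩
        rw [r2, r1, hws, hw, hz]
        have hzt : Function.update x s (β⁻¹ (x s)) t = x t := Function.update_of_ne (Ne.symm hst) _ _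
        rw [hzt]
        rw [Function.update_comm (Ne.symm hst)]
        rw [Function.update_idem, ← hxβb, Function.update_eq_self]
      · have e1 : pgate (fun x => x s = b) t hbt τ⁻¹ x = x := pgate_apply_neg x hxb
        have e2 : pgate C s hCs β⁻¹ x = Function.update x s (β⁻¹ (x s)) :=
          pgate_apply_pos x hCx
        set z := Function.update x s (β⁻¹ (x s)) with hz
        have hzs : z s = β⁻¹ (x s) := Function.update_self _ _ _
        have hzb : ¬ (z s = b) := by
          rw [hzs]
          intro hh
          have h3 := congrArg β hh
          simp at h3
          exact hxβb h3
        have e3 : pgate (fun x => x s = b) t hbt τ z = z := pgate_apply_neg z hzb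
        have hCz : C z := (hCs x _).mpr hCx
        have e4 : pgate C s hCs β z = Function.update z s (β (z s)) := pgate_apply_pos z hCz
        rw [e1, e2, e3, e4]
        have r2 : pgate (fun x => C x ∧ x s = b) t h2 τ⁻¹ x = x :=
          pgate_apply_neg x (fun hh => hxb hh.2)
        have r1 : pgate (fun x => C x ∧ x s = β b) t h1 τ x = x :=
          pgate_apply_neg x (fun hh => hxβb hh.2)
        rw [r2, r1, hzs, (by simp : β (β⁻¹ (x s)) = x s), hz, Function.update_idem,
          Function.update_eq_self]
  · by_cases hxb : x s = b
    · have e1 : pgate (fun x => x s = b) t hbt τ⁻¹ x = Function.update x t (τ⁻¹ (x t)) :=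
        pgate_apply_pos x hxb
      set y := Function.update x t (τ⁻¹ (x t)) with hy
      have hCy : ¬ C y := fun hh => hCx ((hCt x _).mp hh)
      have e2 : pgate C s hCs β⁻¹ y = y := pgate_apply_neg y hCy
      have hys : y s = b := by rw [hy, Function.update_of_ne hst, hxb]
      have e3 : pgate (fun x => x s = b) t hbt τ y = Function.update y t (τ (y t)) :=
        pgate_apply_pos y hys
      have hyt : y t = τ⁻¹ (x t) := Function.update_self _ _ _
      have e5 : Function.update y t (τ (y t)) = x := by
        rw [hyt, hy, Function.update_idem]
        simp
      have e4 : pgate C s hCs β x = x := pgate_apply_neg x hCx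
      rw [e1, e2, e3, e5, e4]
      have r2 : pgate (fun x => C x ∧ x s = b) t h2 τ⁻¹ x = x :=
        pgate_apply_neg x (fun hh => hCx hh.1)
      have r1 : pgate (fun x => C x ∧ x s = β b) t h1 τ x = x :=
        pgate_apply_neg x (fun hh => hCx hh.1)
      rw [r2, r1]
    · have e1 : pgate (fun x => x s = b) t hbt τ⁻¹ x = x := pgate_apply_neg x hxb
      have e2 : pgate C s hCs β⁻¹ x = x := pgate_apply_neg x hCx
      have e3 : pgate (fun x => x s = b) t hbt τ x = x := pgate_apply_neg x hxb
      have e4 : pgate C s hCs β x = x := pgate_apply_neg x hCx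
      rw [e1, e2, e3, e4]
      have r2 : pgate (fun x => C x ∧ x s = b) t h2 τ⁻¹ x = x :=
        pgate_apply_neg x (fun hh => hCx hh.1)
      have r1 : pgate (fun x => C x ∧ x s = β b) t h1 τ x = x :=
        pgate_apply_neg x (fun hh => hCx hh.1)
      rw [r2, r1]
end Comm

section CGate
variable {A : Type*} [DecidableEq A] [Fintype A] {N : ℕ}

lemma matches_update_invariant (S : Finset (Fin N)) (p : Fin N → A) {t : Fin N} (ht : t ∉ S) :
    ∀ (x : Fin N → A) v, (∀ i ∈ S, Function.update x t v i = p i) ↔ (∀ i ∈ S, x i = p i) := by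
  intro x v
  constructor <;> intro h i hi
  · have := h i hi
    rwa [Function.update_of_ne (fun he => ht (by rwa [he] at hi))] at this
  · rw [Function.update_of_ne (fun he => ht (by rwa [he] at hi))]
    exact h i hi

/-- The controlled gate: applies `τ` on wire `t` when `x` agrees with the pattern `p`
on the control wires `S`. -/
noncomputable def cgate (S : Finset (Fin N)) (p : Fin N → A) (t : Fin N) (ht : t ∉ S)
    (τ : Equiv.Perm A) : Equiv.Perm (Fin N → A) :=
  pgate (fun x => ∀ i ∈ S, x i = p i) t (matches_update_invariant S p ht) τ

lemma pgate_of_false {C : (Fin N → A) → Prop} {t : Fin N}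
    {hC : ∀ x v, C (Function.update x t v) ↔ C x} {τ : Equiv.Perm A}
    (h : ∀ x, ¬ C x) : pgate C t hC τ = 1 := by
  ext x j
  rw [pgate_apply_neg x (h x)]
  rfl

open Fin.NatCast in
lemma exists_cyclic (hA : 2 ≤ Fintype.card A) :
    ∃ β : Equiv.Perm A, (∀ a c : A, ∃ r : ℕ, (β ^ r) a = c) ∧ ∀ a, β a ≠ a := by
  classical
  have hpos : 0 < Fintype.card A := by omega
  obtain ⟨q', hq⟩ : ∃ q', Fintype.card A = q' + 1 := ⟨Fintype.card A - 1, by omega⟩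
  let e : A ≃ Fin (q' + 1) := (Fintype.equivFin A).trans (finCongr hq)
  let β : Equiv.Perm A := e.trans ((finRotate (q' + 1)).trans e.symm)
  have hβ : ∀ (r : ℕ) (a : A), (β ^ r) a = e.symm (e a + (r : Fin (q' + 1))) := by
    intro r
    induction r with
    | zero => intro a; simp
    | succ k ih =>
      intro a
      rw [pow_succ', Equiv.Perm.mul_apply, ih a]
      show e.symm ((finRotate (q' + 1)) (e (e.symm (e a + (k : Fin (q' + 1)))))) = _
      rw [Equiv.apply_symm_apply, finRotate_succ_apply]
      congr 1
      push_cast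
      exact add_assoc _ _ _
  have hcyc : ∀ a c : A, ∃ r : ℕ, (β ^ r) a = c := by
    intro a c
    refine ⟨((e c - e a : Fin (q' + 1)) : ℕ), ?_⟩
    rw [hβ, Fin.cast_val_eq_self, add_sub_cancel, Equiv.symm_apply_apply]
  refine ⟨β, hcyc, fun a ha => ?_⟩
  have hall : ∀ r : ℕ, (β ^ r) a = a := by
    intro r
    induction r with
    | zero => simp
    | succ k ih => rw [pow_succ, Equiv.Perm.mul_apply, ha, ih]
  obtain ⟨c, hc⟩ := Fintype.exists_ne_of_one_lt_card (by omega) a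
  obtain ⟨r, hr⟩ := hcyc a c
  exact hc (by rw [← hr, hall])

end CGate

section Base
variable {A : Type*} [DecidableEq A] [Fintype A] {n : ℕ}

lemma cgate_apply_pos {S : Finset (Fin N)} {p : Fin N → A} {t : Fin N} {ht : t ∉ S}
    {τ : Equiv.Perm A} (x : Fin N → A) (h : ∀ i ∈ S, x i = p i) :
    cgate S p t ht τ x = Function.update x t (τ (x t)) := pgate_apply_pos x h

lemma cgate_apply_neg {S : Finset (Fin N)} {p : Fin N → A} {t : Fin N} {ht : t ∉ S}
    {τ : Equiv.Perm A} (x : Fin N → A) (h : ¬ ∀ i ∈ S, x i = p i) :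
    cgate S p t ht τ x = x := pgate_apply_neg x h

/-- The group generated by extensions of arity-4 permutations. -/
def extGroup (A : Type*) (n : ℕ) : Subgroup (Equiv.Perm (Fin n → A)) :=
  Subgroup.closure {g : Equiv.Perm (Fin n → A) | ∃ f : Equiv.Perm (Fin 4 → A), IsExtensionOf f g}

lemma gatePerm_mem (hn : 4 ≤ n) {ι : Fin 4 → Fin n} (hι : Function.Injective ι)
    (f : Equiv.Perm (Fin 4 → A)) : gatePerm hn hι f ∈ extGroup A n :=
  Subgroup.subset_closure ⟨f, gatePerm_isExtensionOf hn hι f⟩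

lemma cgate_mem_of_card_le (hn : 4 ≤ n) (S : Finset (Fin n)) (p : Fin n → A) (t : Fin n)
    (ht : t ∉ S) (τ : Equiv.Perm A) (hS : S.card ≤ 3) :
    cgate S p t ht τ ∈ extGroup A n := by
  classical
  have hT : (insert t S).card ≤ 4 := le_trans (Finset.card_insert_le _ _) (by omega)
  obtain ⟨T', hsub, hcard⟩ := Finset.exists_superset_card_eq hT (by simpa using hn)
  let e := T'.equivFinOfCardEq hcard
  let ι : Fin 4 → Fin n := fun k => (e.symm k : Fin n)
  have hι : Function.Injective ι := fun k k' h => by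
    have : e.symm k = e.symm k' := Subtype.coe_injective h
    exact e.symm.injective this
  have htT : t ∈ T' := hsub (Finset.mem_insert_self t S)
  set t4 : Fin 4 := e ⟨t, htT⟩ with ht4def
  have hit4 : ι t4 = t := by simp [ι, t4]
  have hrange : ∀ i ∈ S, ∃ k, ι k = i := fun i hi =>
    ⟨e ⟨i, hsub (Finset.mem_insert_of_mem hi)⟩, by simp [ι]⟩
  set S4 : Finset (Fin 4) := Finset.univ.filter (fun k => ι k ∈ S) with hS4def
  have ht4 : t4 ∉ S4 := by
    simp only [hS4def, Finset.mem_filter, Finset.mem_univ, true_and, hit4]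
    exact ht
  set f : Equiv.Perm (Fin 4 → A) := cgate S4 (p ∘ ι) t4 ht4 τ with hfdef
  have key : gatePerm hn hι f = cgate S p t ht τ := by
    apply Equiv.ext
    intro x
    funext j
    by_cases hj : ∃ k, ι k = j
    · obtain ⟨k, rfl⟩ := hj
      rw [gatePerm_apply_img]
      have hcond : (∀ k' ∈ S4, (x ∘ ι) k' = (p ∘ ι) k') ↔ (∀ i ∈ S, x i = p i) := by
        constructor
        · intro h i hi
          obtain ⟨k', hk'⟩ := hrange i hi
          rw [← hk']
          exact h k' (Finset.mem_filter.mpr ⟨Finset.mem_univ _, by rw [hk']; exact hi⟩)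
        · intro h k' hk4
          exact h _ (Finset.mem_filter.mp hk4).2
      by_cases hc : ∀ i ∈ S, x i = p i
      · rw [hfdef, cgate_apply_pos (x ∘ ι) (hcond.mpr hc), cgate_apply_pos x hc]
        by_cases hkt : k = t4
        · subst hkt
          rw [Function.update_self, hit4, Function.update_self]
          show τ (x (ι t4)) = τ (x t)
          rw [hit4]
        · have hne : ι k ≠ t := fun hh => hkt (hι (by rw [hit4, hh]))
          rw [Function.update_of_ne hkt, Function.update_of_ne hne]
          rfl
      · rw [hfdef, cgate_apply_neg (x ∘ ι) (fun hh => hc (hcond.mp hh)),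
          cgate_apply_neg x hc]
        rfl
    · push_neg at hj
      rw [gatePerm_apply_ne hn hι f x j hj]
      by_cases hc : ∀ i ∈ S, x i = p i
      · rw [cgate_apply_pos x hc, Function.update_of_ne (fun hh => hj t4 (by rw [hit4, hh]))]
      · rw [cgate_apply_neg x hc]
  rw [← key]
  exact gatePerm_mem hn hι f

end Base

section MainInduction
variable {A : Type*} [DecidableEq A] [Fintype A] {n : ℕ}

lemma matches_erase {N : ℕ} {S : Finset (Fin N)} {s1 : Fin N} (hs1 : s1 ∈ S) (p : Fin N → A)
    (w : A) (x : Fin N → A) :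
    (∀ i ∈ S, x i = Function.update p s1 w i) ↔
      ((∀ i ∈ S.erase s1, x i = p i) ∧ x s1 = w) := by
  constructor
  · intro h
    refine ⟨fun i hi => ?_, ?_⟩
    · have := h i (Finset.mem_of_mem_erase hi)
      rwa [Function.update_of_ne (Finset.ne_of_mem_erase hi)] at this
    · have := h s1 hs1
      rwa [Function.update_self] at this
  · rintro ⟨h1, h2⟩ i hi
    by_cases his : i = s1
    · subst his
      rwa [Function.update_self]
    · rw [Function.update_of_ne his]
      exact h1 i (Finset.mem_erase.mpr ⟨his, hi⟩)

lemma cgate_mem (hodd : Odd (Fintype.card A)) (hA : 3 ≤ Fintype.card A) (hn : 4 ≤ n) :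
    ∀ (S : Finset (Fin n)) (p : Fin n → A) (t : Fin n) (ht : t ∉ S) (τ : Equiv.Perm A),
      cgate S p t ht τ ∈ extGroup A n := by
  suffices h : ∀ m (S : Finset (Fin n)) (p : Fin n → A) (t : Fin n) (ht : t ∉ S)
      (τ : Equiv.Perm A), S.card ≤ m → cgate S p t ht τ ∈ extGroup A n by
    intro S p t ht τ
    exact h S.card S p t ht τ le_rfl
  intro m
  induction m with
  | zero =>
    intro S p t ht τ hcard
    exact cgate_mem_of_card_le hn S p t ht τ (by omega)
  | succ m ih =>
    intro S p t ht τ hcard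
    by_cases h3 : S.card ≤ 3
    · exact cgate_mem_of_card_le hn S p t ht τ h3
    push_neg at h3
    -- setup
    have hq2 : 2 ≤ Fintype.card A := by omega
    obtain ⟨β, hcyc, hβne⟩ := exists_cyclic (A := A) hq2
    obtain ⟨s1, hs1⟩ := Finset.card_pos.mp (by omega : 0 < S.card)
    have hs1t : s1 ≠ t := fun h => ht (h ▸ hs1)
    have hts1 : t ≠ s1 := Ne.symm hs1t
    set S' := S.erase s1 with hS'def
    have hs1S' : s1 ∉ S' := Finset.notMem_erase _ _
    have htS' : t ∉ S' := fun h => ht (Finset.mem_of_mem_erase h)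
    have hcardS' : S'.card ≤ m := by
      rw [hS'def, Finset.card_erase_of_mem hs1]
      omega
    set C : (Fin n → A) → Prop := fun x => ∀ i ∈ S', x i = p i with hCdef
    have hCs : ∀ x v, C (Function.update x s1 v) ↔ C x :=
      matches_update_invariant S' p hs1S'
    have hCt : ∀ x v, C (Function.update x t v) ↔ C x :=
      matches_update_invariant S' p htS'
    -- the key construction, for swaps
    have swap_mem : ∀ (a b : A), a ≠ b →
        cgate S p t ht (Equiv.swap a b) ∈ extGroup A n := by
      intro a b hab
      set τ' : Equiv.Perm A := Equiv.swap a b with hτ'def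
      have hand : ∀ (w : A) (x : Fin n → A) v,
          (C (Function.update x t v) ∧ (Function.update x t v) s1 = w) ↔ (C x ∧ x s1 = w) :=
        fun w x v => by rw [hCt x v, Function.update_of_ne hs1t]
      set X : A → Equiv.Perm (Fin n → A) :=
        fun w => pgate (fun x => C x ∧ x s1 = w) t (hand w) τ' with hXdef
      have hXcgate : ∀ w, X w = cgate S (Function.update p s1 w) t ht τ' :=
        fun w => pgate_congr (fun x => ((matches_erase hs1 p w x)).symm)
      have hbt : ∀ (x : Fin n → A) v, (Function.update x t v) s1 = b ↔ x s1 = b :=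
        fun x v => by rw [Function.update_of_ne hs1t]
      -- ratio elements
      have ratio1 : ∀ b0 : A, X (β b0) * (X b0)⁻¹ ∈ extGroup A n := by
        intro b0
        have hbt0 : ∀ (x : Fin n → A) v, (Function.update x t v) s1 = b0 ↔ x s1 = b0 :=
          fun x v => by rw [Function.update_of_ne hs1t]
        have hcommid := pgate_commutator (C := C) (s := s1) (t := t) hs1t hCs hCt β τ' b0
          (hβne b0) hbt0 (hand (β b0)) (hand b0)
        have hu : pgate C s1 hCs β ∈ extGroup A n := ih S' p s1 hs1S' β hcardS'
        have hveq : pgate (fun x => x s1 = b0) t hbt0 τ' =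
            cgate {s1} (fun _ => b0) t (by simp [hts1]) τ' :=
          pgate_congr (fun x => by simp)
        have hv : pgate (fun x => x s1 = b0) t hbt0 τ' ∈ extGroup A n := by
          rw [hveq]
          exact cgate_mem_of_card_le hn _ _ _ _ _ (by simp)
        have hXinv : pgate (fun x => C x ∧ x s1 = b0) t (hand b0) τ'⁻¹ = (X b0)⁻¹ := by
          rw [hXdef]
          exact pgate_inv.symm
        rw [hXdef]
        show pgate _ t (hand (β b0)) τ' * pgate _ t (hand b0) τ'⁻¹ ∈ extGroup A n
        rw [← hcommid]
        exact mul_mem (mul_mem (mul_mem hu hv) (inv_mem hu)) (inv_mem hv)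
      have ratio : ∀ w v0 : A, X w * (X v0)⁻¹ ∈ extGroup A n := by
        have hr : ∀ (r : ℕ) (b0 : A), X ((β ^ r) b0) * (X b0)⁻¹ ∈ extGroup A n := by
          intro r
          induction r with
          | zero =>
            intro b0
            rw [pow_zero]
            simp only [Equiv.Perm.one_apply]
            rw [mul_inv_cancel]
            exact one_mem _
          | succ k ihk =>
            intro b0
            have heq : X ((β ^ (k + 1)) b0) * (X b0)⁻¹ =
                (X (β ((β ^ k) b0)) * (X ((β ^ k) b0))⁻¹) * (X ((β ^ k) b0) * (X b0)⁻¹) := by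
              rw [pow_succ', Equiv.Perm.mul_apply]
              group
            rw [heq]
            exact mul_mem (ratio1 _) (ihk b0)
        intro w v0
        obtain ⟨r, hr'⟩ := hcyc v0 w
        rw [← hr']
        exact hr r v0
      -- the products Y over value sets
      have handY : ∀ (V : Finset A) (x : Fin n → A) v,
          (C (Function.update x t v) ∧ (Function.update x t v) s1 ∈ V) ↔ (C x ∧ x s1 ∈ V) :=
        fun V x v => by rw [hCt x v, Function.update_of_ne hs1t]
      set Y : Finset A → Equiv.Perm (Fin n → A) :=
        fun V => pgate (fun x => C x ∧ x s1 ∈ V) t (handY V) τ' with hYdef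
      have hY0 : Y ∅ = 1 := pgate_of_false (fun x hx => by simpa using hx.2)
      have hYins : ∀ (w : A) (V : Finset A), w ∉ V → Y (insert w V) = X w * Y V := by
        intro w V hw
        apply Equiv.ext
        intro x
        by_cases hc : C x
        · by_cases hx1 : x s1 = w
          · have hYVx : Y V x = x := pgate_apply_neg x (fun hh => hw (hx1 ▸ hh.2))
            rw [Equiv.Perm.mul_apply, hYVx,
              pgate_apply_pos x ⟨hc, by simp [hx1]⟩, pgate_apply_pos x ⟨hc, hx1⟩]
          · by_cases hxV : x s1 ∈ V
            · rw [pgate_apply_pos x ⟨hc, by simp [hxV]⟩, Equiv.Perm.mul_apply,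
                pgate_apply_pos x ⟨hc, hxV⟩]
              rw [pgate_apply_neg _ (fun hh => hx1 (by
                have := hh.2
                rwa [Function.update_of_ne hs1t] at this))]
            · rw [pgate_apply_neg x (fun hh => by
                  rcases Finset.mem_insert.mp hh.2 with h | h
                  exacts [hx1 h, hxV h]),
                Equiv.Perm.mul_apply, pgate_apply_neg x (fun hh => hxV hh.2),
                pgate_apply_neg x (fun hh => hx1 hh.2)]
        · rw [pgate_apply_neg x (fun hh => hc hh.1), Equiv.Perm.mul_apply,
            pgate_apply_neg x (fun hh => hc hh.1), pgate_apply_neg x (fun hh => hc hh.1)]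
      have hYuniv : Y Finset.univ = cgate S' p t htS' τ' :=
        pgate_congr (fun x => by simp [C])
      have hXcomm : ∀ (w : A) (V : Finset A), Commute (X w) (Y V) :=
        fun w V => pgate_commute (Commute.refl τ')
      -- main claim by induction over value sets
      have claim : ∀ V : Finset A, p s1 ∉ V →
          Y V * ((X (p s1)) ^ V.card)⁻¹ ∈ extGroup A n := by
        intro V
        induction V using Finset.induction_on with
        | empty =>
          intro _
          rw [hY0]
          simp only [Finset.card_empty, pow_zero, inv_one, one_mul]
          exact one_mem _
        | @insert w V hwV ihV =>
          intro hv0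
          have hv0V : p s1 ∉ V := fun h => hv0 (Finset.mem_insert_of_mem h)
          rw [hYins w V hwV, Finset.card_insert_of_notMem hwV]
          have hc := ((hXcomm (p s1) V).inv_left).eq
          have hre : X w * Y V * ((X (p s1)) ^ (V.card + 1))⁻¹ =
              (X w * (X (p s1))⁻¹) * (Y V * ((X (p s1)) ^ V.card)⁻¹) := by
            rw [pow_succ, mul_inv_rev]
            calc X w * Y V * ((X (p s1))⁻¹ * ((X (p s1)) ^ V.card)⁻¹)
                = X w * (Y V * (X (p s1))⁻¹) * ((X (p s1)) ^ V.card)⁻¹ := by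
                  simp only [mul_assoc]
              _ = X w * ((X (p s1))⁻¹ * Y V) * ((X (p s1)) ^ V.card)⁻¹ := by rw [← hc]
              _ = (X w * (X (p s1))⁻¹) * (Y V * ((X (p s1)) ^ V.card)⁻¹) := by
                  simp only [mul_assoc]
          rw [hre]
          exact mul_mem (ratio w (p s1)) (ihV hv0V)
      -- assemble
      set q := Fintype.card A with hqdef
      have hq1 : q = (q - 1) + 1 := by omega
      have hsplit : Y Finset.univ = X (p s1) * Y (Finset.univ.erase (p s1)) := by
        have huniv : (Finset.univ : Finset A) = insert (p s1) (Finset.univ.erase (p s1)) :=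
          (Finset.insert_erase (Finset.mem_univ _)).symm
        conv_lhs => rw [huniv]
        rw [hYins _ _ (Finset.notMem_erase _ _)]
      have hD := claim (Finset.univ.erase (p s1)) (Finset.notMem_erase _ _)
      have hqcard : (Finset.univ.erase (p s1)).card = q - 1 := by
        rw [Finset.card_erase_of_mem (Finset.mem_univ _), Finset.card_univ]
      rw [hqcard] at hD
      have hP : cgate S' p t htS' τ' ∈ extGroup A n := ih S' p t htS' τ' hcardS'
      -- X (p s1) ^ q = P * D⁻¹
      have hcpow : Commute (X (p s1)) ((X (p s1)) ^ (q - 1)) := Commute.pow_right (Commute.refl _) _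
      have hcy : Commute ((X (p s1)) ^ (q - 1)) (Y (Finset.univ.erase (p s1))) :=
        Commute.pow_left (hXcomm _ _) _
      have hPD : cgate S' p t htS' τ' =
          X (p s1) ^ q * (Y (Finset.univ.erase (p s1)) * ((X (p s1)) ^ (q - 1))⁻¹) := by
        rw [← hYuniv, hsplit]
        conv_rhs => rw [hq1]
        rw [pow_succ']
        calc X (p s1) * Y (Finset.univ.erase (p s1))
            = X (p s1) * (((X (p s1)) ^ (q-1)) * ((X (p s1)) ^ (q-1))⁻¹) *
              Y (Finset.univ.erase (p s1)) := by
              rw [mul_inv_cancel, mul_one]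
          _ = X (p s1) * ((X (p s1)) ^ (q-1)) *
              (((X (p s1)) ^ (q-1))⁻¹ * Y (Finset.univ.erase (p s1))) := by
              simp only [mul_assoc]
          _ = X (p s1) * (X (p s1)) ^ (q-1) *
              (Y (Finset.univ.erase (p s1)) * ((X (p s1)) ^ (q-1))⁻¹) := by
              rw [(hcy.inv_left).eq]
      have hXq : X (p s1) ^ q ∈ extGroup A n := by
        have : X (p s1) ^ q = cgate S' p t htS' τ' *
            (Y (Finset.univ.erase (p s1)) * ((X (p s1)) ^ (q - 1))⁻¹)⁻¹ := by
          rw [hPD]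
          group
        rw [this]
        exact mul_mem hP (inv_mem hD)
      -- τ'^q = τ'
      have hτq : τ' ^ q = τ' := by
        obtain ⟨k, hk⟩ := hodd
        rw [hk, pow_add, pow_mul, pow_one]
        have h2 : τ' ^ 2 = 1 := by
          rw [pow_two, hτ'def, Equiv.swap_mul_self]
        rw [h2, one_pow, one_mul]
      have hXpow : X (p s1) ^ q = X (p s1) := by
        rw [hXdef]
        show (pgate _ t (hand (p s1)) τ') ^ q = pgate _ t (hand (p s1)) τ'
        rw [← pgate_pow, hτq]
      have hfinal : X (p s1) = cgate S p t ht τ' := by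
        rw [hXcgate (p s1), Function.update_eq_self]
      rw [← hfinal, ← hXpow]
      exact hXq
    -- now all swaps; extend to all permutations
    have hτmem : τ ∈ Subgroup.closure {σ : Equiv.Perm A | σ.IsSwap} := by
      rw [Equiv.Perm.closure_isSwap]
      exact Subgroup.mem_top τ
    refine Subgroup.closure_induction
      (p := fun σ _ => cgate S p t ht σ ∈ extGroup A n) ?_ ?_ ?_ ?_ hτmem
    · rintro σ ⟨a, b, hab, rfl⟩
      exact swap_mem a b hab
    · show cgate S p t ht 1 ∈ extGroup A n
      have h1 : cgate S p t ht 1 = 1 := pgate_one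
      rw [h1]
      exact one_mem _
    · intro σ1 σ2 _ _ h1 h2
      show cgate S p t ht (σ1 * σ2) ∈ extGroup A n
      have he : cgate S p t ht (σ1 * σ2) = cgate S p t ht σ1 * cgate S p t ht σ2 := pgate_mul
      rw [he]
      exact mul_mem h1 h2
    · intro σ _ h1
      show cgate S p t ht σ⁻¹ ∈ extGroup A n
      have he : cgate S p t ht σ⁻¹ = (cgate S p t ht σ)⁻¹ := pgate_inv.symm
      rw [he]
      exact inv_mem h1

end MainInduction

section Transitivity
variable {A : Type*} [DecidableEq A] [Fintype A] {n : ℕ}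

lemma exists_perm_two {β : Type*} [Fintype β] [DecidableEq β] {x1 x2 y1 y2 : β}
    (h1 : x1 ≠ x2) (h2 : y1 ≠ y2) : ∃ f : Equiv.Perm β, f x1 = y1 ∧ f x2 = y2 := by
  have hu : Function.Injective (fun c : Bool => if c then x1 else x2) := by
    intro c c' h
    cases c <;> cases c' <;> simp at h <;> first | rfl | exact absurd h h1.symm | exact absurd h h1
  have hv : Function.Injective (fun c : Bool => if c then y1 else y2) := by
    intro c c' h
    cases c <;> cases c' <;> simp at h <;> first | rfl | exact absurd h h2.symm | exact absurd h h2
  obtain ⟨π, hπ⟩ := exists_perm_comp hu hv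
  exact ⟨π, by simpa using hπ true, by simpa using hπ false⟩

lemma step_mem (hn : 4 ≤ n) {ι : Fin 4 → Fin n} (hι : Function.Injective ι)
    (x y x' y' : Fin n → A)
    (hout : ∀ j, (∀ k, ι k ≠ j) → x j = x' j ∧ y j = y' j)
    (hxy : x ∘ ι ≠ y ∘ ι) (hxy' : x' ∘ ι ≠ y' ∘ ι) :
    ∃ h ∈ extGroup A n, h x = x' ∧ h y = y' := by
  obtain ⟨f, hf1, hf2⟩ := exists_perm_two hxy hxy'
  refine ⟨gatePerm hn hι f, gatePerm_mem hn hι f, ?_, ?_⟩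
  · funext j
    by_cases hj : ∃ k, ι k = j
    · obtain ⟨k, rfl⟩ := hj
      rw [gatePerm_apply_img, hf1]
      rfl
    · push_neg at hj
      rw [gatePerm_apply_ne hn hι f x j hj]
      exact (hout j hj).1
  · funext j
    by_cases hj : ∃ k, ι k = j
    · obtain ⟨k, rfl⟩ := hj
      rw [gatePerm_apply_img, hf2]
      rfl
    · push_neg at hj
      rw [gatePerm_apply_ne hn hι f y j hj]
      exact (hout j hj).2

lemma exists_embed (hn : 4 ≤ n) (T : Finset (Fin n)) (hT : T.card ≤ 4) :
    ∃ ι : Fin 4 → Fin n, Function.Injective ι ∧ ∀ i ∈ T, ∃ k, ι k = i := by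
  obtain ⟨T', hsub, hcard⟩ := Finset.exists_superset_card_eq hT (by simpa using hn)
  let e := T'.equivFinOfCardEq hcard
  exact ⟨fun k => (e.symm k : Fin n),
    fun k k' h => e.symm.injective (Subtype.coe_injective h),
    fun i hi => ⟨e ⟨i, hsub hi⟩, by simp⟩⟩

lemma pair_trans (hn : 4 ≤ n) (a b c : A) (hbc : b ≠ c) (i0 : Fin n)
    (x y : Fin n → A) (hxy : x ≠ y) :
    ∃ h ∈ extGroup A n,
      h x = Function.update (fun _ => a) i0 b ∧ h y = Function.update (fun _ => a) i0 c := by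
  obtain ⟨i, hi⟩ := Function.ne_iff.mp hxy
  -- notation for overwriting with `a` on a finset
  set wr : (Fin n → A) → Finset (Fin n) → (Fin n → A) :=
    fun z Sf => fun j => if j ∈ Sf then a else z j with hwrdef
  have stage1 : ∀ Sf : Finset (Fin n), i ∉ Sf →
      ∃ h ∈ extGroup A n, h x = wr x Sf ∧ h y = wr y Sf := by
    intro Sf
    induction Sf using Finset.induction_on with
    | empty =>
      intro _
      refine ⟨1, one_mem _, ?_, ?_⟩ <;> · funext j; simp [hwrdef]
    | @insert j Sf hj ihS =>
      intro hiins
      have hiSf : i ∉ Sf := fun h => hiins (Finset.mem_insert_of_mem h)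
      have hij : i ≠ j := fun h => hiins (h ▸ Finset.mem_insert_self j Sf)
      obtain ⟨h1, hmem1, hx1, hy1⟩ := ihS hiSf
      obtain ⟨ι, hι, hcov⟩ := exists_embed hn {i, j} (by
        apply le_trans (Finset.card_insert_le _ _)
        simp)
      obtain ⟨ki, hki⟩ := hcov i (by simp)
      obtain ⟨kj, hkj⟩ := hcov j (by simp)
      have hstep : ∃ h ∈ extGroup A n,
          h (wr x Sf) = wr x (insert j Sf) ∧ h (wr y Sf) = wr y (insert j Sf) := by
        apply step_mem hn hι
        · intro j' hj'
          have hjj' : j' ≠ j := fun h => hj' kj (by rw [hkj, h])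
          constructor <;> · simp only [hwrdef]
                            simp [Finset.mem_insert, hjj']
        · intro hcontra
          have := congrFun hcontra ki
          simp only [Function.comp_apply, hwrdef] at this
          rw [hki, if_neg hiSf, if_neg hiSf] at this
          exact hi this
        · intro hcontra
          have := congrFun hcontra ki
          simp only [Function.comp_apply, hwrdef] at this
          rw [hki, if_neg hiins, if_neg hiins] at this
          exact hi this
      obtain ⟨h2, hmem2, hx2, hy2⟩ := hstep
      refine ⟨h2 * h1, mul_mem hmem2 hmem1, ?_, ?_⟩
      · rw [Equiv.Perm.mul_apply, hx1, hx2]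
      · rw [Equiv.Perm.mul_apply, hy1, hy2]
  obtain ⟨h1, hmem1, hx1, hy1⟩ := stage1 (Finset.univ.erase i) (Finset.notMem_erase _ _)
  have hwr : ∀ z : Fin n → A, wr z (Finset.univ.erase i) = Function.update (fun _ => a) i (z i) := by
    intro z
    funext j
    by_cases hji : j = i
    · subst hji; simp [hwrdef]
    · simp [hwrdef, hji, Function.update_of_ne hji]
  -- stage 2
  obtain ⟨ι, hι, hcov⟩ := exists_embed hn {i0, i} (by
    apply le_trans (Finset.card_insert_le _ _)
    simp)
  obtain ⟨k0, hk0⟩ := hcov i0 (by simp)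
  obtain ⟨ki, hki⟩ := hcov i (by simp)
  have hstep2 : ∃ h ∈ extGroup A n,
      h (Function.update (fun _ => a) i (x i)) = Function.update (fun _ => a) i0 b ∧
      h (Function.update (fun _ => a) i (y i)) = Function.update (fun _ => a) i0 c := by
    apply step_mem hn hι
    · intro j hj
      have hji : j ≠ i := fun h => hj ki (h ▸ hki)
      have hji0 : j ≠ i0 := fun h => hj k0 (h ▸ hk0)
      constructor <;>
        rw [Function.update_of_ne hji, Function.update_of_ne hji0]
    · intro hcontra
      have := congrFun hcontra ki
      simp only [Function.comp_apply] at this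
      rw [hki] at this
      simp only [Function.update_self] at this
      exact hi this
    · intro hcontra
      have := congrFun hcontra k0
      simp only [Function.comp_apply] at this
      rw [hk0] at this
      simp only [Function.update_self] at this
      exact hbc this
  obtain ⟨h2, hmem2, hx2, hy2⟩ := hstep2
  refine ⟨h2 * h1, mul_mem hmem2 hmem1, ?_, ?_⟩
  · rw [Equiv.Perm.mul_apply, hx1, hwr, hx2]
  · rw [Equiv.Perm.mul_apply, hy1, hwr, hy2]

end Transitivity

section Endgame
variable {A : Type*} [DecidableEq A] [Fintype A] {n : ℕ}

lemma cgate_full_swap (a b c : A) (hbc : b ≠ c) (i0 : Fin n) :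
    cgate (Finset.univ.erase i0) (fun _ => a) i0 (Finset.notMem_erase _ _) (Equiv.swap b c) =
    Equiv.swap (Function.update (fun _ => a) i0 b) (Function.update (fun _ => a) i0 c) := by
  apply Equiv.ext
  intro x
  set u : Fin n → A := Function.update (fun _ => a) i0 b with hudef
  set v : Fin n → A := Function.update (fun _ => a) i0 c with hvdef
  by_cases hcond : ∀ j ∈ Finset.univ.erase i0, x j = (fun _ : Fin n => a) j
  · have hx : ∀ j, j ≠ i0 → x j = a := fun j hj => hcond j (by simp [hj])
    rw [cgate_apply_pos x hcond]
    by_cases hb : x i0 = b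
    · have hxu : x = u := by
        funext j
        by_cases hj : j = i0
        · subst hj; rw [hudef, Function.update_self, hb]
        · rw [hx j hj, hudef, Function.update_of_ne hj]
      rw [hxu, hudef]
      rw [Function.update_self, Equiv.swap_apply_left, Function.update_idem]
      rw [← hudef, ← hvdef, Equiv.swap_apply_left]
    · by_cases hc : x i0 = c
      · have hxv : x = v := by
          funext j
          by_cases hj : j = i0
          · subst hj; rw [hvdef, Function.update_self, hc]
          · rw [hx j hj, hvdef, Function.update_of_ne hj]
        rw [hxv, hvdef]
        rw [Function.update_self, Equiv.swap_apply_right, Function.update_idem]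
        rw [← hudef, ← hvdef, Equiv.swap_apply_right]
      · rw [Equiv.swap_apply_of_ne_of_ne hb hc, Function.update_eq_self]
        have hxu : x ≠ u := fun h => hb (by rw [h, hudef, Function.update_self])
        have hxv : x ≠ v := fun h => hc (by rw [h, hvdef, Function.update_self])
        rw [Equiv.swap_apply_of_ne_of_ne hxu hxv]
  · rw [cgate_apply_neg x hcond]
    push_neg at hcond
    obtain ⟨j, hjmem, hja⟩ := hcond
    have hji0 : j ≠ i0 := (Finset.mem_erase.mp hjmem).1
    have hxu : x ≠ u := fun h => hja (by rw [h, hudef, Function.update_of_ne hji0])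
    have hxv : x ≠ v := fun h => hja (by rw [h, hvdef, Function.update_of_ne hji0])
    rw [Equiv.swap_apply_of_ne_of_ne hxu hxv]

lemma exists_three (hA : 3 ≤ Fintype.card A) : ∃ a b c : A, a ≠ b ∧ a ≠ c ∧ b ≠ c := by
  have : Nonempty A := Fintype.card_pos_iff.mp (by omega)
  obtain ⟨a⟩ := this
  obtain ⟨b, hb⟩ := Fintype.exists_ne_of_one_lt_card (by omega) a
  have hex : ∃ c, c ∉ ({a, b} : Finset A) := by
    by_contra h
    push_neg at h
    have hsub : (Finset.univ : Finset A) ⊆ {a, b} := fun c _ => h c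
    have := Finset.card_le_card hsub
    have h2 : ({a, b} : Finset A).card ≤ 2 :=
      le_trans (Finset.card_insert_le _ _) (by simp)
    rw [Finset.card_univ] at this
    omega
  obtain ⟨c, hc⟩ := hex
  simp only [Finset.mem_insert, Finset.mem_singleton, not_or] at hc
  exact ⟨a, b, c, hb.symm, fun h => hc.1 h.symm, fun h => hc.2 h.symm⟩

lemma swap_mem_ext (hodd : Odd (Fintype.card A)) (hA : 3 ≤ Fintype.card A) (hn : 4 ≤ n)
    (u v : Fin n → A) (huv : u ≠ v) : Equiv.swap u v ∈ extGroup A n := by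
  obtain ⟨a, b, c, hab, hac, hbc⟩ := exists_three hA
  set i0 : Fin n := ⟨0, by omega⟩ with hi0
  obtain ⟨h, hmem, hu, hv⟩ := pair_trans hn a b c hbc i0 u v huv
  have hcan : Equiv.swap (Function.update (fun _ => a) i0 b) (Function.update (fun _ => a) i0 c)
      ∈ extGroup A n := by
    rw [← cgate_full_swap a b c hbc i0]
    exact cgate_mem hodd hA hn _ _ _ _ _
  have hconj : Equiv.swap (h u) (h v) = h * Equiv.swap u v * h⁻¹ :=
    Equiv.swap_apply_apply h u v
  have : Equiv.swap u v = h⁻¹ * Equiv.swap (h u) (h v) * h := by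
    rw [hconj]
    group
  rw [this, hu, hv]
  exact mul_mem (mul_mem (inv_mem hmem) hcan) hmem

end Endgame

/-- For `|A|` odd with `|A| ≥ 3` and `n ≥ 4`, the full symmetric group `Sym(A^n)`
is exactly the subgroup generated by all extensions to arity `n` of permutations of `A^4`. -/
theorem stmt1 (A : Type*) [Fintype A] [DecidableEq A]
    (hodd : Odd (Fintype.card A)) (hA : 3 ≤ Fintype.card A)
    (n : ℕ) (hn : 4 ≤ n) :
    Subgroup.closure
      {g : Equiv.Perm (Fin n → A) | ∃ f : Equiv.Perm (Fin 4 → A), IsExtensionOf f g} = ⊤ := by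
  show extGroup A n = ⊤
  have hsub : {σ : Equiv.Perm (Fin n → A) | σ.IsSwap} ⊆ (extGroup A n : Set _) := by
    rintro σ ⟨u, v, huv, rfl⟩
    exact swap_mem_ext hodd hA hn u v huv
  apply le_antisymm le_top
  calc (⊤ : Subgroup (Equiv.Perm (Fin n → A)))
      = Subgroup.closure {σ : Equiv.Perm (Fin n → A) | σ.IsSwap} :=
        Equiv.Perm.closure_isSwap.symm
    _ ≤ extGroup A n := (Subgroup.closure_le _).mpr hsub
end

section
/- Let A be a finite set, let P ⊆ Sym(A^ℓ) and Q ⊆ Sym(A^n), let h, k, m ∈ ℕ with h + n ≥ k + ℓ. Suppose that every h-controlled Q-permutation of A^{h+n} belongs to the subgroup of Sym(A^{h+n}) generated by all extensions to arity h+n of k-controlled P-permutations (which are permutations of A^{k+ℓ}). Then every (h+m)-controlled Q-permutation of A^{h+m+n} belongs to the subgroup of Sym(A^{h+m+n}) generated by all extensions to arity h+m+n of (k+m)-controlled P-permutations. -/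
/-- The `w`-controlled permutation `f_{w,p}` of `A^(k+ℓ)`: maps `(u,v)` to `(u, p v)`
if `u = w` and fixes it otherwise. -/
def controlledPerm {A : Type*} [DecidableEq A] {k ℓ : ℕ} (w : Fin k → A)
    (p : Equiv.Perm (Fin ℓ → A)) : Equiv.Perm (Fin (k + ℓ) → A) :=
  (splitEquiv A k ℓ).symm.permCongr
    { toFun := fun uv => (uv.1, if uv.1 = w then p uv.2 else uv.2)
      invFun := fun uv => (uv.1, if uv.1 = w then p.symm uv.2 else uv.2)
      left_inv := fun uv => by by_cases h : uv.1 = w <;> simp [h, Prod.ext_iff]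
      right_inv := fun uv => by by_cases h : uv.1 = w <;> simp [h, Prod.ext_iff] }

/-- The `k`-controlled `P`-permutations of `A^(k+ℓ)`: wire-permutation conjugates of the
permutations `f_{w,p}` with `p ∈ P`. -/
def ControlledPerms {A : Type*} [DecidableEq A] {ℓ : ℕ} (k : ℕ)
    (P : Set (Equiv.Perm (Fin ℓ → A))) : Set (Equiv.Perm (Fin (k + ℓ) → A)) :=
  { g | ∃ w : Fin k → A, ∃ p ∈ P, ∃ α : Equiv.Perm (Fin (k + ℓ)),
      g = wirePerm α * controlledPerm w p * (wirePerm α)⁻¹ }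

open Equiv

section Basics
variable {A X Y Z W : Type*}

theorem wirePerm_def {n : ℕ} (α : Perm (Fin n)) :
    (wirePerm α : Perm (Fin n → A)) = Equiv.arrowCongr α (Equiv.refl A) := rfl

theorem wirePerm_one {n : ℕ} : (wirePerm 1 : Perm (Fin n → A)) = 1 := by
  ext x i; rfl

theorem wirePerm_mul {n : ℕ} (α β : Perm (Fin n)) :
    (wirePerm (α * β) : Perm (Fin n → A)) = wirePerm α * wirePerm β := by
  ext x i; rfl

theorem wirePerm_inv {n : ℕ} (α : Perm (Fin n)) :
    (wirePerm α⁻¹ : Perm (Fin n → A)) = (wirePerm α)⁻¹ := by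
  ext x i; rfl

theorem permCongr_mul (e : X ≃ Y) (p q : Perm X) :
    e.permCongr (p * q) = e.permCongr p * e.permCongr q := by
  ext y; simp [Perm.mul_apply]

theorem permCongr_inv (e : X ≃ Y) (p : Perm X) :
    e.permCongr p⁻¹ = (e.permCongr p)⁻¹ := by
  rfl

theorem permCongr_one (e : X ≃ Y) : e.permCongr 1 = 1 :=
  e.permCongr_refl

theorem permCongr_permCongr (e : X ≃ Y) (f : Y ≃ Z) (p : Perm X) :
    f.permCongr (e.permCongr p) = (e.trans f).permCongr p := by
  ext z; simp

theorem refl_permCongr (p : Perm X) : (Equiv.refl X).permCongr p = p := by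
  ext z; simp

/-- conjugation form of permCongr for a self-equivalence -/
theorem permCongr_conj (e : Perm X) (p : Perm X) :
    e.permCongr p = e * p * e⁻¹ := by
  ext x; simp [Perm.mul_apply, Perm.inv_def]

end Basics
section Ctrl
open Equiv
variable {A U V Z U₁ U₂ : Type*}

/-- abstract controlled permutation on a product -/
def ctrlE [DecidableEq U] (w : U) (p : Equiv.Perm V) : Equiv.Perm (U × V) :=
  { toFun := fun uv => (uv.1, if uv.1 = w then p uv.2 else uv.2)
    invFun := fun uv => (uv.1, if uv.1 = w then p.symm uv.2 else uv.2)
    left_inv := fun uv => by by_cases h : uv.1 = w <;> simp [h, Prod.ext_iff]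
    right_inv := fun uv => by by_cases h : uv.1 = w <;> simp [h, Prod.ext_iff] }

theorem ctrlE_apply [DecidableEq U] (w : U) (p : Equiv.Perm V) (uv : U × V) :
    ctrlE w p uv = (uv.1, if uv.1 = w then p uv.2 else uv.2) := rfl

theorem controlledPerm_def {A : Type*} [DecidableEq A] {k ℓ : ℕ} (w : Fin k → A)
    (p : Equiv.Perm (Fin ℓ → A)) :
    controlledPerm w p = (splitEquiv A k ℓ).symm.permCongr (ctrlE w p) := rfl

theorem ctrlE_one [DecidableEq U] (w : U) : ctrlE w (1 : Perm V) = 1 := by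
  ext uv : 1
  simp [ctrlE_apply]

theorem ctrlE_mul [DecidableEq U] (w : U) (p q : Perm V) :
    ctrlE w (p * q) = ctrlE w p * ctrlE w q := by
  ext uv : 1
  rcases uv with ⟨u, v⟩
  by_cases h : u = w <;> simp [ctrlE_apply, Perm.mul_apply, h]

/-- transport of `ctrlE` along a product of equivalences -/
theorem ctrlE_transport {U' V' : Type*} [DecidableEq U] [DecidableEq U']
    (e₁ : U ≃ U') (e₂ : V ≃ V') (w : U) (p : Perm V) :
    (Equiv.prodCongr e₁ e₂).permCongr (ctrlE w p) = ctrlE (e₁ w) (e₂.permCongr p) := by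
  ext uv : 1
  rcases uv with ⟨u, v⟩
  by_cases h : u = e₁ w
  · simp [ctrlE_apply, prodCongr_apply, h]
  · have h' : e₁.symm u ≠ w := fun hc => h (by rw [← hc, e₁.apply_symm_apply])
    simp [ctrlE_apply, prodCongr_apply, h, h']

theorem prodCongr_permCongr_prodCongr {X X' Y Y' : Type*}
    (e : X ≃ X') (f : Y ≃ Y') (x : Perm X) (y : Perm Y) :
    (Equiv.prodCongr e f).permCongr (Equiv.prodCongr x y)
      = Equiv.prodCongr (e.permCongr x) (f.permCongr y) := by
  ext uv : 1
  rcases uv with ⟨u, v⟩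
  simp

/-- the shuffle used for merging a control into a controlled `oplusId` -/
def shuf3 (U₁ U₂ V Z : Type*) : U₂ × ((U₁ × V) × Z) ≃ ((U₁ × U₂) × V) × Z :=
  { toFun := fun x => (((x.2.1.1, x.1), x.2.1.2), x.2.2)
    invFun := fun y => (y.1.1.2, ((y.1.1.1, y.1.2), y.2))
    left_inv := fun _ => rfl
    right_inv := fun _ => rfl }

theorem ctrlE_merge3 [DecidableEq U₁] [DecidableEq U₂] (v : U₁) (w : U₂)
    (p : Perm V) :
    (shuf3 U₁ U₂ V Z).permCongr (ctrlE w (Equiv.prodCongr (ctrlE v p) (Equiv.refl Z)))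
      = Equiv.prodCongr (ctrlE ((v, w) : U₁ × U₂) p) (Equiv.refl Z) := by
  ext x : 1
  rcases x with ⟨⟨⟨u₁, u₂⟩, t⟩, z⟩
  by_cases h₁ : u₁ = v <;> by_cases h₂ : u₂ = w <;>
    simp [shuf3, ctrlE_apply, prodCongr_apply, h₁, h₂, Prod.ext_iff]

/-- the shuffle used for merging two controls -/
def shuf2 (U₁ U₂ V : Type*) : U₂ × (U₁ × V) ≃ (U₁ × U₂) × V :=
  { toFun := fun x => ((x.2.1, x.1), x.2.2)
    invFun := fun y => (y.1.2, (y.1.1, y.2))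
    left_inv := fun _ => rfl
    right_inv := fun _ => rfl }

theorem ctrlE_merge2 [DecidableEq U₁] [DecidableEq U₂] (v : U₁) (w : U₂)
    (p : Perm V) :
    (shuf2 U₁ U₂ V).permCongr (ctrlE w (ctrlE v p))
      = ctrlE ((v, w) : U₁ × U₂) p := by
  ext x : 1
  rcases x with ⟨⟨u₁, u₂⟩, t⟩
  by_cases h₁ : u₁ = v <;> by_cases h₂ : u₂ = w <;>
    simp [shuf2, ctrlE_apply, h₁, h₂, Prod.ext_iff]

end Ctrl
section Wire
open Equiv
variable {A : Type*}

theorem arrowCongr_permCongr {I J : Type*} (e : I ≃ J) (f : Perm I) :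
    (Equiv.arrowCongr e (Equiv.refl A)).permCongr (Equiv.arrowCongr f (Equiv.refl A))
      = Equiv.arrowCongr (e.permCongr f) (Equiv.refl A) := by
  ext x : 1
  funext j
  simp [Equiv.permCongr_def]

/-- naturality of sumArrowEquivProdArrow -/
theorem sumArrow_natural {I₁ I₂ J₁ J₂ : Type*} (f₁ : I₁ ≃ J₁) (f₂ : I₂ ≃ J₂) :
    (Equiv.sumArrowEquivProdArrow I₁ I₂ A).trans
        (Equiv.prodCongr (Equiv.arrowCongr f₁ (Equiv.refl A))
          (Equiv.arrowCongr f₂ (Equiv.refl A)))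
      = (Equiv.arrowCongr (Equiv.sumCongr f₁ f₂) (Equiv.refl A)).trans
          (Equiv.sumArrowEquivProdArrow J₁ J₂ A) := by
  ext x : 1
  constructor <;> (funext j; simp)

theorem splitEquiv_factor (a b : ℕ) :
    splitEquiv A a b = (Equiv.arrowCongr finSumFinEquiv.symm (Equiv.refl A)).trans
      (Equiv.sumArrowEquivProdArrow _ _ A) := rfl

theorem splitEquiv_symm_factor (a b : ℕ) :
    (splitEquiv A a b).symm = (Equiv.sumArrowEquivProdArrow _ _ A).symm.trans
      (Equiv.arrowCongr finSumFinEquiv (Equiv.refl A)) := by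
  rw [splitEquiv_factor]
  ext x j : 2
  simp

/-- index-level sum of two permutations -/
def sumIdx {a b : ℕ} (γ₁ : Perm (Fin a)) (γ₂ : Perm (Fin b)) : Perm (Fin (a + b)) :=
  finSumFinEquiv.permCongr (Equiv.sumCongr γ₁ γ₂)

theorem sumArrow_permCongr_sumCongr {I₁ I₂ : Type*} (γ₁ : Perm I₁) (γ₂ : Perm I₂) :
    (Equiv.sumArrowEquivProdArrow I₁ I₂ A).permCongr
        (Equiv.arrowCongr (Equiv.sumCongr γ₁ γ₂) (Equiv.refl A))
      = Equiv.prodCongr (Equiv.arrowCongr γ₁ (Equiv.refl A))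
          (Equiv.arrowCongr γ₂ (Equiv.refl A)) := by
  ext x : 1
  constructor <;> (funext j; simp)

/-- wire transport: split-conjugating a product of wire permutations -/
theorem wire_transport {a b : ℕ} (γ₁ : Perm (Fin a)) (γ₂ : Perm (Fin b)) :
    (splitEquiv A a b).symm.permCongr
        (Equiv.prodCongr (wirePerm γ₁) (wirePerm γ₂))
      = (wirePerm (sumIdx γ₁ γ₂) : Perm (Fin (a + b) → A)) := by
  rw [splitEquiv_symm_factor, wirePerm_def, wirePerm_def,
    ← sumArrow_permCongr_sumCongr (A := A) γ₁ γ₂, permCongr_permCongr,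
    ← Equiv.trans_assoc, Equiv.self_trans_symm, Equiv.refl_trans, arrowCongr_permCongr]
  rfl

end Wire
section WConj
open Equiv
variable {A : Type*}

/-- conjugacy by a wire permutation -/
def WConj {n : ℕ} (x y : Perm (Fin n → A)) : Prop :=
  ∃ β : Perm (Fin n), x = wirePerm β * y * (wirePerm β)⁻¹

theorem WConj.refl {n : ℕ} (x : Perm (Fin n → A)) : WConj x x :=
  ⟨1, by rw [wirePerm_one]; group⟩

theorem WConj.trans {n : ℕ} {x y z : Perm (Fin n → A)} (h₁ : WConj x y)
    (h₂ : WConj y z) : WConj x z := by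
  obtain ⟨β, rfl⟩ := h₁
  obtain ⟨γ, rfl⟩ := h₂
  exact ⟨β * γ, by rw [wirePerm_mul]; group⟩

theorem WConj.symm {n : ℕ} {x y : Perm (Fin n → A)} (h : WConj x y) : WConj y x := by
  obtain ⟨β, rfl⟩ := h
  exact ⟨β⁻¹, by rw [wirePerm_inv]; group⟩

theorem WConj.conj {n : ℕ} {x y : Perm (Fin n → A)} (h : WConj x y)
    (β : Perm (Fin n)) : WConj (wirePerm β * x * (wirePerm β)⁻¹) y :=
  WConj.trans ⟨β, rfl⟩ h

variable [DecidableEq A]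

theorem controlledPerm_mul {k ℓ : ℕ} (w : Fin k → A) (p q : Perm (Fin ℓ → A)) :
    controlledPerm w (p * q) = controlledPerm w p * controlledPerm w q := by
  rw [controlledPerm_def, controlledPerm_def, controlledPerm_def, ctrlE_mul,
    _root_.permCongr_mul]

theorem controlledPerm_one {k ℓ : ℕ} (w : Fin k → A) :
    controlledPerm w (1 : Perm (Fin ℓ → A)) = 1 := by
  rw [controlledPerm_def, ctrlE_one, permCongr_one]

/-- `controlledPerm w` sends wire conjugates to wire conjugates. -/
theorem WConj.controlled {k ℓ : ℕ} (w : Fin k → A) {x y : Perm (Fin ℓ → A)}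
    (h : WConj x y) : WConj (controlledPerm w x) (controlledPerm w y) := by
  obtain ⟨γ, rfl⟩ := h
  refine ⟨sumIdx 1 γ, ?_⟩
  have h1 : wirePerm γ * y * (wirePerm γ)⁻¹ = (wirePerm γ).permCongr y :=
    (permCongr_conj _ _).symm
  rw [h1, controlledPerm_def, controlledPerm_def]
  have h2 : ctrlE w ((wirePerm γ).permCongr y)
      = (Equiv.prodCongr (Equiv.refl (Fin k → A)) (wirePerm γ)).permCongr (ctrlE w y) := by
    rw [ctrlE_transport]
    simp
  rw [h2, permCongr_conj (Equiv.prodCongr (Equiv.refl (Fin k → A)) (wirePerm γ)),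
    _root_.permCongr_mul, _root_.permCongr_mul, permCongr_inv]
  have h3 : (splitEquiv A k ℓ).symm.permCongr
        (Equiv.prodCongr (Equiv.refl (Fin k → A)) (wirePerm γ))
      = wirePerm (sumIdx 1 γ) := by
    rw [← wire_transport, wirePerm_one]
    rfl
  rw [h3]

/-- `oplusId` sends wire conjugates to wire conjugates. -/
theorem WConj.oplus {t N : ℕ} (hle : t ≤ N) {x y : Perm (Fin t → A)}
    (h : WConj x y) : WConj (oplusId hle x) (oplusId hle y) := by
  obtain ⟨γ, rfl⟩ := h
  have h1 : wirePerm γ * y * (wirePerm γ)⁻¹ = (wirePerm γ).permCongr y :=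
    (permCongr_conj _ _).symm
  set D := ((Equiv.arrowCongr (finCongr (Nat.add_sub_cancel' hle).symm) (Equiv.refl A)).trans
    (splitEquiv A t (N - t))) with hD
  have hop : ∀ z : Perm (Fin t → A), oplusId hle z
      = D.symm.permCongr (Equiv.prodCongr z (Equiv.refl (Fin (N - t) → A))) := fun _ => rfl
  have h2 : Equiv.prodCongr ((wirePerm γ).permCongr y) (Equiv.refl (Fin (N - t) → A))
      = (Equiv.prodCongr (wirePerm γ) (Equiv.refl (Fin (N - t) → A))).permCongr
          (Equiv.prodCongr y (Equiv.refl (Fin (N - t) → A))) := by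
    rw [prodCongr_permCongr_prodCongr]
    simp
  rw [h1, hop, hop, h2,
    permCongr_conj (Equiv.prodCongr (wirePerm γ) (Equiv.refl (Fin (N - t) → A))),
    _root_.permCongr_mul, _root_.permCongr_mul, permCongr_inv]
  refine ⟨(finCongr (Nat.add_sub_cancel' hle)).permCongr (sumIdx γ 1), ?_⟩
  have h3 : D.symm.permCongr (Equiv.prodCongr (wirePerm γ) (Equiv.refl (Fin (N - t) → A)))
      = wirePerm ((finCongr (Nat.add_sub_cancel' hle)).permCongr (sumIdx γ 1)) := by
    have : Equiv.prodCongr (wirePerm (A := A) γ) (Equiv.refl (Fin (N - t) → A))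
        = Equiv.prodCongr (wirePerm (A := A) γ) (wirePerm (A := A) (1 : Perm (Fin (N - t)))) := by
      rw [wirePerm_one]; rfl
    rw [hD, this]
    have hsymm : ((Equiv.arrowCongr (finCongr (Nat.add_sub_cancel' hle).symm)
          (Equiv.refl A)).trans (splitEquiv A t (N - t))).symm
        = (splitEquiv A t (N - t)).symm.trans
            (Equiv.arrowCongr (finCongr (Nat.add_sub_cancel' hle)) (Equiv.refl A)) := by
      ext x j : 2
      simp
    rw [hsymm, ← permCongr_permCongr, wire_transport, wirePerm_def, wirePerm_def,
      arrowCongr_permCongr]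
  rw [h3]

end WConj
section Tower
open Equiv
variable {A : Type*}

theorem prodCongr_trans' {α₁ α₂ β₁ β₂ γ₁ γ₂ : Type*} (e₁ : α₁ ≃ β₁) (e₂ : α₂ ≃ β₂)
    (f₁ : β₁ ≃ γ₁) (f₂ : β₂ ≃ γ₂) :
    (Equiv.prodCongr e₁ e₂).trans (Equiv.prodCongr f₁ f₂)
      = Equiv.prodCongr (e₁.trans f₁) (e₂.trans f₂) := by
  ext x : 1
  rcases x with ⟨a, b⟩
  simp

/-- two transports of the same abstract permutation along tower-factorable
equivalences are wire-conjugate -/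
theorem wconj_of_towers {J W : Type*} {M : ℕ} (Λ : Perm W)
    (e₁ e₂ : W ≃ (Fin M → A)) (σ : (J → A) ≃ W) (ρ₁ ρ₂ : J ≃ Fin M)
    (h₁ : σ.trans e₁ = Equiv.arrowCongr ρ₁ (Equiv.refl A))
    (h₂ : σ.trans e₂ = Equiv.arrowCongr ρ₂ (Equiv.refl A)) :
    WConj (e₂.permCongr Λ) (e₁.permCongr Λ) := by
  refine ⟨ρ₁.symm.trans ρ₂, ?_⟩
  have he₂ : e₂ = e₁.trans (Equiv.arrowCongr (ρ₁.symm.trans ρ₂) (Equiv.refl A)) := by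
    have h₁' : e₁ = σ.symm.trans (Equiv.arrowCongr ρ₁ (Equiv.refl A)) := by
      rw [← h₁, ← Equiv.trans_assoc, Equiv.symm_trans_self, Equiv.refl_trans]
    have h₂' : e₂ = σ.symm.trans (Equiv.arrowCongr ρ₂ (Equiv.refl A)) := by
      rw [← h₂, ← Equiv.trans_assoc, Equiv.symm_trans_self, Equiv.refl_trans]
    rw [h₁', h₂', Equiv.trans_assoc, ← Equiv.arrowCongr_trans]
    congr 2
    rw [← Equiv.trans_assoc, Equiv.self_trans_symm, Equiv.refl_trans]
  rw [he₂, ← permCongr_permCongr, permCongr_conj]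
  rfl

end Tower
section Fac
open Equiv
variable {A : Type*} [DecidableEq A]

theorem fac₁ {k m l M r : ℕ} (hr : r = M - (k + m + l)) (hle' : k + m + l ≤ M) :
    ((Equiv.sumArrowEquivProdArrow ((Fin k ⊕ Fin m) ⊕ Fin l) (Fin r) A).trans
      (Equiv.prodCongr ((Equiv.sumArrowEquivProdArrow (Fin k ⊕ Fin m) (Fin l) A).trans
        (Equiv.prodCongr (Equiv.sumArrowEquivProdArrow (Fin k) (Fin m) A)
          (Equiv.refl (Fin l → A)))) (Equiv.refl (Fin r → A)))).trans
    ((Equiv.prodCongr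
      ((Equiv.prodCongr (splitEquiv A k m).symm (Equiv.refl (Fin l → A))).trans
        (splitEquiv A (k + m) l).symm)
      (Equiv.arrowCongr (finCongr hr) (Equiv.refl A))).trans
      ((Equiv.arrowCongr (finCongr (Nat.add_sub_cancel' hle').symm) (Equiv.refl A)).trans
        (splitEquiv A (k + m + l) (M - (k + m + l)))).symm)
    = Equiv.arrowCongr
        ((Equiv.sumCongr ((Equiv.sumCongr finSumFinEquiv (Equiv.refl (Fin l))).trans
            finSumFinEquiv) (finCongr hr)).trans
          (finSumFinEquiv.trans (finCongr (Nat.add_sub_cancel' hle'))))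
        (Equiv.refl A) := by
  ext x : 1
  funext i
  rcases hs : finSumFinEquiv.symm (finCongr (Nat.add_sub_cancel' hle').symm i) with j | j <;>
    simp only [finCongr_apply] at hs <;>
    simp [splitEquiv, Equiv.sumArrowEquivProdArrow, hs]
  rcases hs2 : finSumFinEquiv.symm j with j2 | j2 <;> simp [hs2]


/-- index-level analogue of `shuf3` -/
def sumShuf3 (a b c d : Type*) : ((a ⊕ b) ⊕ c) ⊕ d ≃ b ⊕ ((a ⊕ c) ⊕ d) :=
  { toFun := fun x => match x with
      | .inl (.inl (.inl u)) => .inr (.inl (.inl u))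
      | .inl (.inl (.inr u)) => .inl u
      | .inl (.inr u) => .inr (.inl (.inr u))
      | .inr u => .inr (.inr u)
    invFun := fun x => match x with
      | .inl u => .inl (.inl (.inr u))
      | .inr (.inl (.inl u)) => .inl (.inl (.inl u))
      | .inr (.inl (.inr u)) => .inl (.inr u)
      | .inr (.inr u) => .inr u
    left_inv := by rintro (((u | u) | u) | u) <;> rfl
    right_inv := by rintro (u | ((u | u) | u)) <;> rfl }

theorem fac₂ {k m l N M : ℕ} (hle : k + l ≤ N) (hM : m + N = M) :
    ((Equiv.sumArrowEquivProdArrow ((Fin k ⊕ Fin m) ⊕ Fin l) (Fin (N - (k + l))) A).trans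
      (Equiv.prodCongr ((Equiv.sumArrowEquivProdArrow (Fin k ⊕ Fin m) (Fin l) A).trans
        (Equiv.prodCongr (Equiv.sumArrowEquivProdArrow (Fin k) (Fin m) A)
          (Equiv.refl (Fin l → A)))) (Equiv.refl (Fin (N - (k + l)) → A)))).trans
    ((shuf3 (Fin k → A) (Fin m → A) (Fin l → A) (Fin (N - (k + l)) → A)).symm.trans
      ((Equiv.prodCongr (Equiv.refl (Fin m → A))
        ((Equiv.prodCongr (splitEquiv A k l).symm (Equiv.refl (Fin (N - (k + l)) → A))).trans
          ((Equiv.arrowCongr (finCongr (Nat.add_sub_cancel' hle).symm) (Equiv.refl A)).trans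
            (splitEquiv A (k + l) (N - (k + l)))).symm)).trans
        ((splitEquiv A m N).symm.trans (Equiv.arrowCongr (finCongr hM) (Equiv.refl A)))))
    = Equiv.arrowCongr
        ((sumShuf3 (Fin k) (Fin m) (Fin l) (Fin (N - (k + l)))).trans
          ((Equiv.sumCongr (Equiv.refl (Fin m))
            ((Equiv.sumCongr finSumFinEquiv (Equiv.refl (Fin (N - (k + l))))).trans
              (finSumFinEquiv.trans (finCongr (Nat.add_sub_cancel' hle))))).trans
            (finSumFinEquiv.trans (finCongr hM))))
        (Equiv.refl A) := by
  ext x : 1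
  funext i
  rcases hs : finSumFinEquiv.symm (finCongr hM.symm i) with j | j <;>
    simp only [finCongr_apply] at hs <;>
    simp [splitEquiv, Equiv.sumArrowEquivProdArrow, shuf3, sumShuf3, hs]
  rcases hs2 : finSumFinEquiv.symm (Fin.cast (Nat.add_sub_cancel' hle).symm j) with j2 | j2 <;>
    simp [hs2]
  rcases hs3 : finSumFinEquiv.symm j2 with j3 | j3 <;> simp [hs3]


theorem main_merge {k m l N M : ℕ} (hle : k + l ≤ N) (hM : m + N = M)
    (hle' : k + m + l ≤ M) (v : Fin k → A) (w₂ : Fin m → A) (p : Perm (Fin l → A)) :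
    WConj ((Equiv.arrowCongr (finCongr hM) (Equiv.refl A)).permCongr
        (controlledPerm w₂ (oplusId hle (controlledPerm v p))))
      (oplusId hle' (controlledPerm ((splitEquiv A k m).symm (v, w₂)) p)) := by
  have hr : N - (k + l) = M - (k + m + l) := by omega
  set Λ : Perm ((((Fin k → A) × (Fin m → A)) × (Fin l → A)) × (Fin (N - (k + l)) → A)) :=
    Equiv.prodCongr (ctrlE ((v, w₂) : (Fin k → A) × (Fin m → A)) p)
      (Equiv.refl (Fin (N - (k + l)) → A)) with hΛ
  set e₁ := (Equiv.prodCongr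
      ((Equiv.prodCongr (splitEquiv A k m).symm (Equiv.refl (Fin l → A))).trans
        (splitEquiv A (k + m) l).symm)
      (Equiv.arrowCongr (finCongr hr) (Equiv.refl A))).trans
      ((Equiv.arrowCongr (finCongr (Nat.add_sub_cancel' hle').symm) (Equiv.refl A)).trans
        (splitEquiv A (k + m + l) (M - (k + m + l)))).symm with he₁
  set e₂ := (shuf3 (Fin k → A) (Fin m → A) (Fin l → A) (Fin (N - (k + l)) → A)).symm.trans
      ((Equiv.prodCongr (Equiv.refl (Fin m → A))
        ((Equiv.prodCongr (splitEquiv A k l).symm (Equiv.refl (Fin (N - (k + l)) → A))).trans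
          ((Equiv.arrowCongr (finCongr (Nat.add_sub_cancel' hle).symm) (Equiv.refl A)).trans
            (splitEquiv A (k + l) (N - (k + l)))).symm)).trans
        ((splitEquiv A m N).symm.trans (Equiv.arrowCongr (finCongr hM) (Equiv.refl A)))) with he₂
  have hside₁ : e₁.permCongr Λ
      = oplusId hle' (controlledPerm ((splitEquiv A k m).symm (v, w₂)) p) := by
    rw [he₁, hΛ, ← permCongr_permCongr, prodCongr_permCongr_prodCongr,
      ← permCongr_permCongr, ctrlE_transport, refl_permCongr, permCongr_refl]
    rfl
  have hside₂ : e₂.permCongr Λ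
      = (Equiv.arrowCongr (finCongr hM) (Equiv.refl A)).permCongr
          (controlledPerm w₂ (oplusId hle (controlledPerm v p))) := by
    rw [he₂, hΛ, ← permCongr_permCongr, ← permCongr_permCongr]
    have hΛ' : (shuf3 (Fin k → A) (Fin m → A) (Fin l → A) (Fin (N - (k + l)) → A)).symm.permCongr
        (Equiv.prodCongr (ctrlE ((v, w₂) : (Fin k → A) × (Fin m → A)) p)
          (Equiv.refl (Fin (N - (k + l)) → A)))
        = ctrlE w₂ (Equiv.prodCongr (ctrlE v p) (Equiv.refl (Fin (N - (k + l)) → A))) := by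
      rw [← ctrlE_merge3, permCongr_permCongr, Equiv.self_trans_symm, refl_permCongr]
    have g1 : ((Equiv.prodCongr (splitEquiv A k l).symm (Equiv.refl (Fin (N - (k + l)) → A))).trans
          ((Equiv.arrowCongr (finCongr (Nat.add_sub_cancel' hle).symm) (Equiv.refl A)).trans
            (splitEquiv A (k + l) (N - (k + l)))).symm).permCongr
          (Equiv.prodCongr (ctrlE v p) (Equiv.refl (Fin (N - (k + l)) → A)))
        = oplusId hle (controlledPerm v p) := by
      rw [← permCongr_permCongr, prodCongr_permCongr_prodCongr, permCongr_refl]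
      rfl
    rw [hΛ', ctrlE_transport, g1]
    simp only [Equiv.refl_apply]
    rw [← permCongr_permCongr]
    rfl
  have h := wconj_of_towers (A := A) Λ e₁ e₂
    ((Equiv.sumArrowEquivProdArrow ((Fin k ⊕ Fin m) ⊕ Fin l) (Fin (N - (k + l))) A).trans
      (Equiv.prodCongr ((Equiv.sumArrowEquivProdArrow (Fin k ⊕ Fin m) (Fin l) A).trans
        (Equiv.prodCongr (Equiv.sumArrowEquivProdArrow (Fin k) (Fin m) A)
          (Equiv.refl (Fin l → A)))) (Equiv.refl (Fin (N - (k + l)) → A))))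
    _ _ (fac₁ hr hle') (fac₂ hle hM)
  rw [hside₁, hside₂] at h
  exact h


/-- index-level analogue of `shuf2` -/
def sumShuf2 (a b c : Type*) : (a ⊕ b) ⊕ c ≃ b ⊕ (a ⊕ c) :=
  { toFun := fun x => match x with
      | .inl (.inl u) => .inr (.inl u)
      | .inl (.inr u) => .inl u
      | .inr u => .inr (.inr u)
    invFun := fun x => match x with
      | .inl u => .inl (.inr u)
      | .inr (.inl u) => .inl (.inl u)
      | .inr (.inr u) => .inr u
    left_inv := by rintro ((u | u) | u) <;> rfl
    right_inv := by rintro (u | (u | u)) <;> rfl }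

theorem facL {a b n M : ℕ} (hM' : (a + b) + n = M) :
    ((Equiv.sumArrowEquivProdArrow (Fin a ⊕ Fin b) (Fin n) A).trans
      (Equiv.prodCongr (Equiv.sumArrowEquivProdArrow (Fin a) (Fin b) A)
        (Equiv.refl (Fin n → A)))).trans
    (((Equiv.prodCongr (splitEquiv A a b).symm (Equiv.refl (Fin n → A))).trans
      (splitEquiv A (a + b) n).symm).trans
      (Equiv.arrowCongr (finCongr hM') (Equiv.refl A)))
    = Equiv.arrowCongr
        (((Equiv.sumCongr finSumFinEquiv (Equiv.refl (Fin n))).trans finSumFinEquiv).trans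
          (finCongr hM'))
        (Equiv.refl A) := by
  ext x : 1
  funext i
  rcases hs : finSumFinEquiv.symm (finCongr hM'.symm i) with j | j <;>
    simp only [finCongr_apply] at hs <;>
    simp [splitEquiv, Equiv.sumArrowEquivProdArrow, hs]

theorem facR {a b n M : ℕ} (hM : b + (a + n) = M) :
    ((Equiv.sumArrowEquivProdArrow (Fin a ⊕ Fin b) (Fin n) A).trans
      (Equiv.prodCongr (Equiv.sumArrowEquivProdArrow (Fin a) (Fin b) A)
        (Equiv.refl (Fin n → A)))).trans
    ((shuf2 (Fin a → A) (Fin b → A) (Fin n → A)).symm.trans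
      ((Equiv.prodCongr (Equiv.refl (Fin b → A)) (splitEquiv A a n).symm).trans
        ((splitEquiv A b (a + n)).symm.trans
          (Equiv.arrowCongr (finCongr hM) (Equiv.refl A)))))
    = Equiv.arrowCongr
        ((sumShuf2 (Fin a) (Fin b) (Fin n)).trans
          ((Equiv.sumCongr (Equiv.refl (Fin b)) finSumFinEquiv).trans
            (finSumFinEquiv.trans (finCongr hM))))
        (Equiv.refl A) := by
  ext x : 1
  funext i
  rcases hs : finSumFinEquiv.symm (finCongr hM.symm i) with j | j <;>
    simp only [finCongr_apply] at hs <;>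
    simp [splitEquiv, Equiv.sumArrowEquivProdArrow, shuf2, sumShuf2, hs]
  rcases hs2 : finSumFinEquiv.symm j with j2 | j2 <;> simp [hs2]

theorem control_split {a b n M : ℕ} (hM : b + (a + n) = M) (hM' : (a + b) + n = M)
    (w₁ : Fin a → A) (w₂ : Fin b → A) (q : Perm (Fin n → A)) :
    WConj ((Equiv.arrowCongr (finCongr hM') (Equiv.refl A)).permCongr
        (controlledPerm ((splitEquiv A a b).symm (w₁, w₂)) q))
      ((Equiv.arrowCongr (finCongr hM) (Equiv.refl A)).permCongr
        (controlledPerm w₂ (controlledPerm w₁ q))) := by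
  set Λ : Perm (((Fin a → A) × (Fin b → A)) × (Fin n → A)) :=
    ctrlE ((w₁, w₂) : (Fin a → A) × (Fin b → A)) q with hΛ
  set e₁ := ((Equiv.prodCongr (splitEquiv A a b).symm (Equiv.refl (Fin n → A))).trans
      (splitEquiv A (a + b) n).symm).trans
      (Equiv.arrowCongr (finCongr hM') (Equiv.refl A)) with he₁
  set e₂ := (shuf2 (Fin a → A) (Fin b → A) (Fin n → A)).symm.trans
      ((Equiv.prodCongr (Equiv.refl (Fin b → A)) (splitEquiv A a n).symm).trans
        ((splitEquiv A b (a + n)).symm.trans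
          (Equiv.arrowCongr (finCongr hM) (Equiv.refl A)))) with he₂
  have hside₁ : e₁.permCongr Λ
      = (Equiv.arrowCongr (finCongr hM') (Equiv.refl A)).permCongr
          (controlledPerm ((splitEquiv A a b).symm (w₁, w₂)) q) := by
    rw [he₁, hΛ, ← permCongr_permCongr, ← permCongr_permCongr, ctrlE_transport,
      refl_permCongr]
    rfl
  have hside₂ : e₂.permCongr Λ
      = (Equiv.arrowCongr (finCongr hM) (Equiv.refl A)).permCongr
          (controlledPerm w₂ (controlledPerm w₁ q)) := by
    have hΛ' : (shuf2 (Fin a → A) (Fin b → A) (Fin n → A)).symm.permCongr Λ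
        = ctrlE w₂ (ctrlE w₁ q) := by
      rw [hΛ, ← ctrlE_merge2, permCongr_permCongr, Equiv.self_trans_symm, refl_permCongr]
    rw [he₂, ← permCongr_permCongr, ← permCongr_permCongr, hΛ', ctrlE_transport]
    simp only [Equiv.refl_apply]
    rw [← permCongr_permCongr]
    rfl
  have h := wconj_of_towers (A := A) Λ e₂ e₁
    ((Equiv.sumArrowEquivProdArrow (Fin a ⊕ Fin b) (Fin n) A).trans
      (Equiv.prodCongr (Equiv.sumArrowEquivProdArrow (Fin a) (Fin b) A)
        (Equiv.refl (Fin n → A))))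
    _ _ (by rw [he₂]; exact facR hM) (by rw [he₁, ← Equiv.trans_assoc]; exact facL hM')
  rw [hside₁, hside₂] at h
  exact h

end Fac


section Assemble
open Equiv
variable {A : Type*} [DecidableEq A]

theorem WConj.cast {N₁ N₂ : ℕ} (hc : N₁ = N₂) {x y : Perm (Fin N₁ → A)}
    (h : WConj x y) :
    WConj ((Equiv.arrowCongr (finCongr hc) (Equiv.refl A)).permCongr x)
      ((Equiv.arrowCongr (finCongr hc) (Equiv.refl A)).permCongr y) := by
  obtain ⟨β, rfl⟩ := h
  refine ⟨(finCongr hc).permCongr β, ?_⟩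
  rw [_root_.permCongr_mul, _root_.permCongr_mul, permCongr_inv, wirePerm_def, wirePerm_def,
    arrowCongr_permCongr]

theorem controlledPerm_inv {k ℓ : ℕ} (w : Fin k → A) (p : Perm (Fin ℓ → A)) :
    controlledPerm w p⁻¹ = (controlledPerm w p)⁻¹ := by
  refine eq_inv_of_mul_eq_one_left ?_
  rw [← controlledPerm_mul, inv_mul_cancel, controlledPerm_one]

/-- IsExtensionOf is preserved by wire conjugation of the big permutation -/
theorem isExtensionOf_wire_conj {ℓ n : ℕ} {f : Perm (Fin ℓ → A)} {g : Perm (Fin n → A)}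
    (hfg : IsExtensionOf f g) (β : Perm (Fin n)) :
    IsExtensionOf f (wirePerm β * g * (wirePerm β)⁻¹) := by
  obtain ⟨hle, α, rfl⟩ := hfg
  exact ⟨hle, β * α, by rw [wirePerm_mul]; group⟩

theorem stmt8' (A : Type*) [Fintype A] [DecidableEq A] {l n : ℕ}
    (P : Set (Equiv.Perm (Fin l → A))) (Q : Set (Equiv.Perm (Fin n → A)))
    (h k m : ℕ) (harity : k + l ≤ h + n)
    (hyp : ∀ g ∈ ControlledPerms h Q, g ∈ Subgroup.closure
      {g' : Equiv.Perm (Fin (h + n) → A) | ∃ p ∈ ControlledPerms k P, IsExtensionOf p g'}) :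
    ∀ g ∈ ControlledPerms (h + m) Q, g ∈ Subgroup.closure
      {g' : Equiv.Perm (Fin (h + m + n) → A) |
        ∃ p ∈ ControlledPerms (k + m) P, IsExtensionOf p g'} := by
  intro g hg
  obtain ⟨w, q, hq, α, rfl⟩ := hg
  set S' : Set (Perm (Fin (h + m + n) → A)) :=
    {g' | ∃ p ∈ ControlledPerms (k + m) P, IsExtensionOf p g'} with hS'
  have hM : m + (h + n) = h + m + n := by omega
  set w₁ : Fin h → A := ((splitEquiv A h m) w).1 with hw₁
  set w₂ : Fin m → A := ((splitEquiv A h m) w).2 with hw₂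
  have hw : (splitEquiv A h m).symm (w₁, w₂) = w := by
    rw [hw₁, hw₂]
    exact (splitEquiv A h m).symm_apply_apply w
  -- splitting the control of the given permutation
  have hcs : WConj (controlledPerm w q)
      ((Equiv.arrowCongr (finCongr hM) (Equiv.refl A)).permCongr
        (controlledPerm w₂ (controlledPerm w₁ q))) := by
    have := control_split (A := A) hM rfl w₁ w₂ q
    rw [hw] at this
    simpa [finCongr_refl, Equiv.Perm.refl_mul, Equiv.Perm.mul_refl, Equiv.Perm.refl_inv] using this
  -- the image of the closure hypothesis
  have hx : controlledPerm w₁ q ∈ ControlledPerms h Q :=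
    ⟨w₁, q, hq, 1, by rw [wirePerm_one]; group⟩
  -- conjugation stability of the closure of S'
  have hconj : ∀ x ∈ Subgroup.closure S', ∀ β : Perm (Fin (h + m + n)),
      wirePerm β * x * (wirePerm β)⁻¹ ∈ Subgroup.closure S' := by
    intro x hx β
    induction hx using Subgroup.closure_induction with
    | mem s hs =>
      obtain ⟨p'', hp'', hext⟩ := hs
      exact Subgroup.subset_closure ⟨p'', hp'', isExtensionOf_wire_conj hext β⟩
    | one => simpa using Subgroup.one_mem _
    | mul a b ha hb iha ihb =>
      have : wirePerm β * (a * b) * (wirePerm β)⁻¹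
          = (wirePerm β * a * (wirePerm β)⁻¹) * (wirePerm β * b * (wirePerm β)⁻¹) := by
        group
      rw [this]
      exact Subgroup.mul_mem _ iha ihb
    | inv a ha iha =>
      have : wirePerm β * a⁻¹ * (wirePerm β)⁻¹
          = (wirePerm β * a * (wirePerm β)⁻¹)⁻¹ := by group
      rw [this]
      exact Subgroup.inv_mem _ iha
  -- pushing the closure membership through the "add m control wires" map
  have hmain : ∀ x ∈ Subgroup.closure
      {g' : Equiv.Perm (Fin (h + n) → A) | ∃ p ∈ ControlledPerms k P, IsExtensionOf p g'},
      (Equiv.arrowCongr (finCongr hM) (Equiv.refl A)).permCongr (controlledPerm w₂ x)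
        ∈ Subgroup.closure S' := by
    intro x hx
    induction hx using Subgroup.closure_induction with
    | mem s hs =>
      obtain ⟨p', hp', hle, γ, rfl⟩ := hs
      obtain ⟨vv, p, hp, δ, rfl⟩ := hp'
      have w2 : WConj (wirePerm γ *
            oplusId hle (wirePerm δ * controlledPerm vv p * (wirePerm δ)⁻¹) * (wirePerm γ)⁻¹)
          (oplusId hle (controlledPerm vv p)) :=
        WConj.trans ⟨γ, rfl⟩ (WConj.oplus hle ⟨δ, rfl⟩)
      have w4 := WConj.cast hM (WConj.controlled w₂ w2)
      have hle' : (k + m) + l ≤ h + m + n := by omega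
      have w5 := w4.trans (main_merge (A := A) hle hM hle' vv w₂ p)
      obtain ⟨β, hβ⟩ := w5
      refine Subgroup.subset_closure ?_
      refine ⟨controlledPerm ((splitEquiv A k m).symm (vv, w₂)) p,
        ⟨(splitEquiv A k m).symm (vv, w₂), p, hp, 1, by rw [wirePerm_one]; group⟩,
        hle', β, hβ⟩
    | one =>
      rw [controlledPerm_one, permCongr_one]
      exact Subgroup.one_mem _
    | mul a b ha hb iha ihb =>
      rw [controlledPerm_mul, _root_.permCongr_mul]
      exact Subgroup.mul_mem _ iha ihb
    | inv a ha iha =>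
      rw [controlledPerm_inv, permCongr_inv]
      exact Subgroup.inv_mem _ iha
  have hmem := hmain _ (hyp _ hx)
  obtain ⟨β, hβ⟩ := hcs
  rw [hβ]
  have : wirePerm α * (wirePerm β *
      ((Equiv.arrowCongr (finCongr hM) (Equiv.refl A)).permCongr
        (controlledPerm w₂ (controlledPerm w₁ q))) * (wirePerm β)⁻¹) * (wirePerm α)⁻¹
      = wirePerm (α * β) *
        ((Equiv.arrowCongr (finCongr hM) (Equiv.refl A)).permCongr
          (controlledPerm w₂ (controlledPerm w₁ q))) * (wirePerm (α * β))⁻¹ := by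
    rw [wirePerm_mul]; group
  rw [this]
  exact hconj _ hmem (α * β)

end Assemble


/-- adding control wires: if every `h`-controlled `Q`-permutation lies in the
subgroup generated by extensions of `k`-controlled `P`-permutations, then every
`(h+m)`-controlled `Q`-permutation lies in the subgroup generated by extensions of
`(k+m)`-controlled `P`-permutations. -/
theorem stmt8 (A : Type*) [Fintype A] [DecidableEq A] {l n : ℕ}
    (P : Set (Equiv.Perm (Fin l → A))) (Q : Set (Equiv.Perm (Fin n → A)))
    (h k m : ℕ) (harity : k + l ≤ h + n)
    (hyp : ∀ g ∈ ControlledPerms h Q, g ∈ Subgroup.closure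
      {g' : Equiv.Perm (Fin (h + n) → A) | ∃ p ∈ ControlledPerms k P, IsExtensionOf p g'}) :
    ∀ g ∈ ControlledPerms (h + m) Q, g ∈ Subgroup.closure
      {g' : Equiv.Perm (Fin (h + m + n) → A) |
        ∃ p ∈ ControlledPerms (k + m) P, IsExtensionOf p g'} := by
  exact stmt8' A P Q h k m harity hyp
end

section
/- Let V be a finite set and let E be a set of 3-element subsets of V. Let H be the graph on V in which distinct vertices a, b are adjacent iff some member of E contains both a and b. Then the subgroup of Sym(V) generated by the 3-cycles (a b c) over all {a,b,c} ∈ E equals the set of permutations g of V such that (i) for every v ∈ V, g(v) lies in the same connected component of H as v, and (ii) for every connected component C of H, the restriction of g to C is an even permutation of C. -/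
set_option maxRecDepth 10000
set_option maxHeartbeats 1000000

def underlyingGraph {V : Type*} (E : Set (Finset V)) : SimpleGraph V where
  Adj a b := a ≠ b ∧ ∃ e ∈ E, a ∈ e ∧ b ∈ e
  symm := ⟨by
    rintro a b ⟨hab, e, he, ha, hb⟩
    exact ⟨hab.symm, e, he, hb, ha⟩⟩
  loopless := ⟨by rintro a ⟨haa, -⟩; exact haa rfl⟩

namespace Stmt10Aux
variable {V : Type*} [DecidableEq V]

def tc (a b c : V) : Equiv.Perm V := Equiv.swap a b * Equiv.swap b c

lemma tc_rot' {a b c : V} (hab : a ≠ b) (hbc : b ≠ c) (hac : a ≠ c) : tc a b c = tc b c a := by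
  ext x
  simp only [tc, Equiv.Perm.mul_apply, Equiv.swap_apply_def]
  split_ifs <;> simp_all

lemma tc_inv' {a b c : V} (hab : a ≠ b) (hbc : b ≠ c) (hac : a ≠ c) :
    (tc a b c)⁻¹ = tc a c b := by
  rw [tc, tc, mul_inv_rev, Equiv.swap_inv, Equiv.swap_inv]
  ext x
  simp only [Equiv.Perm.mul_apply, Equiv.swap_apply_def]
  split_ifs <;> simp_all

lemma tc_conj' (σ : Equiv.Perm V) (a b c : V) : σ * tc a b c * σ⁻¹ = tc (σ a) (σ b) (σ c) := by
  rw [tc, tc, Equiv.swap_apply_apply, Equiv.swap_apply_apply]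
  group

lemma tc_F2' {u v w z : V} (huv : u ≠ v) (huw : u ≠ w) (huz : u ≠ z) (hvw : v ≠ w)
    (hvz : v ≠ z) (hwz : w ≠ z) : tc u v w = tc u z w * (tc u z v)⁻¹ := by
  rw [tc_inv' huz (Ne.symm hvz) huv]
  ext x
  simp only [tc, Equiv.Perm.mul_apply, Equiv.swap_apply_def]
  split_ifs <;> simp_all

lemma tc_comp' {a b c d : V} (hab : a ≠ b) (hac : a ≠ c) (had : a ≠ d) (hbc : b ≠ c)
    (hbd : b ≠ d) (hcd : c ≠ d) : tc a b d = tc a c d * tc a b c := by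
  ext x
  simp only [tc, Equiv.Perm.mul_apply, Equiv.swap_apply_def]
  split_ifs <;> simp_all

section
variable {a b c x : V}
lemma tc_apply_a (hab : a ≠ b) (hac : a ≠ c) : tc a b c a = b := by
  rw [tc, Equiv.Perm.mul_apply, Equiv.swap_apply_of_ne_of_ne hab hac, Equiv.swap_apply_left]

lemma tc_apply_b (hbc : b ≠ c) (hac : a ≠ c) : tc a b c b = c := by
  rw [tc, Equiv.Perm.mul_apply, Equiv.swap_apply_left,
    Equiv.swap_apply_of_ne_of_ne (Ne.symm hac) (Ne.symm hbc)]

lemma tc_apply_c (a : V) : tc a b c c = a := by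
  rw [tc, Equiv.Perm.mul_apply, Equiv.swap_apply_right, Equiv.swap_apply_right]

lemma tc_apply_ne (hxa : x ≠ a) (hxb : x ≠ b) (hxc : x ≠ c) : tc a b c x = x := by
  rw [tc, Equiv.Perm.mul_apply, Equiv.swap_apply_of_ne_of_ne hxb hxc,
    Equiv.swap_apply_of_ne_of_ne hxa hxb]
end

variable (E : Set (Finset V))

def genS : Set (Equiv.Perm V) := {s : Equiv.Perm V | ∃ a b c : V,
    a ≠ b ∧ b ≠ c ∧ a ≠ c ∧ ({a, b, c} : Finset V) ∈ E ∧
    s = Equiv.swap a b * Equiv.swap b c}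

def G : Subgroup (Equiv.Perm V) := Subgroup.closure (genS E)

lemma tc_mem {a b c : V} (h : ({a, b, c} : Finset V) ∈ E) (hab : a ≠ b) (hbc : b ≠ c)
    (hac : a ≠ c) : tc a b c ∈ G E :=
  Subgroup.subset_closure ⟨a, b, c, hab, hbc, hac, h, rfl⟩

lemma mem_rot {a b c : V} (hab : a ≠ b) (hbc : b ≠ c) (hac : a ≠ c)
    (h : tc a b c ∈ G E) : tc b c a ∈ G E := by rw [← tc_rot' hab hbc hac]; exact h

lemma mem_inv3 {a b c : V} (hab : a ≠ b) (hbc : b ≠ c) (hac : a ≠ c)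
    (h : tc a b c ∈ G E) : tc a c b ∈ G E := tc_inv' hab hbc hac ▸ inv_mem h

variable {E}
variable (hE : ∀ e ∈ E, e.card = 3)
include hE

lemma exists_third {a b : V} (h : (underlyingGraph E).Adj a b) :
    ∃ z, z ≠ a ∧ z ≠ b ∧ ({a, b, z} : Finset V) ∈ E := by
  obtain ⟨hab, e, he, ha, hb⟩ : a ≠ b ∧ ∃ e ∈ E, a ∈ e ∧ b ∈ e := h
  have hsub : ({a, b} : Finset V) ⊆ e := by
    intro x hx; rcases Finset.mem_insert.mp hx with rfl | hx
    · exact ha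
    · rwa [Finset.mem_singleton.mp hx]
  have hc1 : (e \ {a, b}).card = 1 := by
    rw [Finset.card_sdiff_of_subset hsub, hE e he, Finset.card_pair hab]
  obtain ⟨z, hz⟩ := Finset.card_eq_one.mp hc1
  have hzmem : z ∈ e \ ({a, b} : Finset V) := hz ▸ Finset.mem_singleton_self z
  rw [Finset.mem_sdiff] at hzmem
  have hza : z ≠ a := fun h' => hzmem.2 (by simp [h'])
  have hzb : z ≠ b := fun h' => hzmem.2 (by simp [h'])
  have he' : ({a, b, z} : Finset V) = e := by
    have h1 : ({a, b} : Finset V) ∪ (e \ {a, b}) = e := Finset.union_sdiff_of_subset hsub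
    rw [hz] at h1
    rw [← h1]; ext x
    simp only [Finset.mem_insert, Finset.mem_singleton, Finset.mem_union]
    tauto
  exact ⟨z, hza, hzb, he' ▸ he⟩

lemma tc_extend {a b c d : V} (hab : a ≠ b) (hbc : b ≠ c) (hac : a ≠ c)
    (h : tc a b c ∈ G E) (hcd : (underlyingGraph E).Adj c d) (hda : d ≠ a) (hdb : d ≠ b) :
    tc a b d ∈ G E := by
  obtain ⟨z, hzc, hzd, hz⟩ := exists_third hE hcd
  have hcd' : c ≠ d := hcd.ne
  by_cases hza : z = a
  · rw [hza] at hzc hzd hz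
    have hmem : ({a, c, d} : Finset V) ∈ E := by
      have hq : ({a, c, d} : Finset V) = {c, d, a} := by
        ext x; simp only [Finset.mem_insert, Finset.mem_singleton]; tauto
      rw [hq]; exact hz
    rw [tc_comp' hab hac (Ne.symm hda) hbc (Ne.symm hdb) hcd']
    exact mul_mem (tc_mem E hmem hac hcd' (Ne.symm hda)) h
  · by_cases hzb : z = b
    · rw [hzb] at hzc hzd hz
      have hmem : ({b, c, d} : Finset V) ∈ E := by
        have hq : ({b, c, d} : Finset V) = {c, d, b} := by
          ext x; simp only [Finset.mem_insert, Finset.mem_singleton]; tauto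
        rw [hq]; exact hz
      have hσ : tc b c d ∈ G E := tc_mem E hmem hbc hcd' hzd
      have hconj := tc_conj' (tc b c d) a b c
      rw [tc_apply_ne hab hac (Ne.symm hda), tc_apply_a hbc hzd,
        tc_apply_b hcd' hzd] at hconj
      have hacd : tc a c d ∈ G E := by
        rw [← hconj]; exact mul_mem (mul_mem hσ h) (inv_mem hσ)
      rw [tc_comp' hab hac (Ne.symm hda) hbc (Ne.symm hdb) hcd']
      exact mul_mem hacd h
    · have hσ : tc c d z ∈ G E := tc_mem E hz hcd' (Ne.symm hzd) (Ne.symm hzc)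
      have hconj := tc_conj' (tc c d z) a b c
      rw [tc_apply_ne hac (Ne.symm hda) (fun h' => hza h'.symm),
        tc_apply_ne hbc (Ne.symm hdb) (fun h' => hzb h'.symm),
        tc_apply_a hcd' (Ne.symm hzc)] at hconj
      rw [← hconj]
      exact mul_mem (mul_mem hσ h) (inv_mem hσ)

lemma tc_two_edge {u v w : V} (huv : (underlyingGraph E).Adj u v)
    (hvw : (underlyingGraph E).Adj v w) (huw : u ≠ w) : tc u v w ∈ G E := by
  obtain ⟨z, hzu, hzv, hz⟩ := exists_third hE huv
  by_cases hwz : w = z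
  · rw [hwz]; exact tc_mem E hz huv.ne hzv.symm hzu.symm
  · have hmem : ({u, z, v} : Finset V) ∈ E := by
      have hq : ({u, z, v} : Finset V) = {u, v, z} := by
        ext x; simp only [Finset.mem_insert, Finset.mem_singleton]; tauto
      rw [hq]; exact hz
    have h1 : tc u z v ∈ G E := tc_mem E hmem (Ne.symm hzu) hzv huv.ne
    have h2 : tc u z w ∈ G E :=
      tc_extend hE (Ne.symm hzu) hzv huv.ne h1 hvw (Ne.symm huw) hwz
    rw [tc_F2' huv.ne huw (Ne.symm hzu) hvw.ne (Ne.symm hzv) hwz]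
    exact mul_mem h2 (inv_mem h1)

lemma tc_walk : ∀ {v w : V} (_ : (underlyingGraph E).Walk v w) {u : V},
    (underlyingGraph E).Adj u v → u ≠ w → v ≠ w → tc u v w ∈ G E := by
  intro v w p
  induction p with
  | nil => intro u _ _ hvw; exact absurd rfl hvw
  | @cons v x w hadj p ih =>
    intro u huv huw hvw
    by_cases hxw : x = w
    · exact tc_two_edge hE huv (hxw ▸ hadj) huw
    · by_cases hxu : x = u
      · rw [hxu] at hadj p ih
        have h1 : tc v u w ∈ G E := ih hadj hvw huw
        have h2 : tc v w u ∈ G E := mem_inv3 E huv.ne.symm huw hvw h1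
        rw [tc_rot' huv.ne hvw huw]
        exact h2
      · have h1 : tc v x w ∈ G E := ih hadj hvw hxw
        have hux : u ≠ x := fun h' => hxu h'.symm
        -- tc x w v  (rotate h1 twice? (v x w) -> (x w v))
        have h3 : tc x w v ∈ G E := mem_rot E hadj.ne hxw hvw h1
        -- extend by Adj v u to get (x w u)
        have h4 : tc x w u ∈ G E :=
          tc_extend hE hxw (Ne.symm hvw) (Ne.symm hadj.ne) h3 huv.symm hux huw
        -- rotate to (u x w)
        have h5 : tc u x w ∈ G E := by
          rw [tc_rot' hux (fun h' => hxw h') huw]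
          exact h4
        -- h2 : (u v x)
        have h2 : tc u v x ∈ G E := tc_two_edge hE huv hadj hux
        have h6 : tc u x v ∈ G E := mem_inv3 E huv.ne hadj.ne hux h2
        rw [tc_F2' huv.ne huw hux hvw (hadj.ne) (Ne.symm hxw)]
        exact mul_mem h5 (inv_mem h6)

lemma tc_reach : ∀ {a b : V} (_ : (underlyingGraph E).Walk a b) {c : V},
    a ≠ b → a ≠ c → b ≠ c → (underlyingGraph E).Reachable b c → tc a b c ∈ G E := by
  intro a b p
  induction p with
  | nil => intro c hab _ _ _; exact absurd rfl hab
  | @cons a x b hadj p ih =>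
    intro c hab hac hbc hr
    by_cases hxb : x = b
    · rw [hxb] at hadj
      obtain ⟨q⟩ := hr
      exact tc_walk hE q hadj hac hbc
    · by_cases hxc : x = c
      · rw [hxc] at hadj p
        have h1 : tc a c b ∈ G E := tc_walk hE p hadj hab (Ne.symm hbc)
        exact mem_inv3 E hac (Ne.symm hbc) hab h1
      · have h1 : tc x b c ∈ G E := ih hxb hxc hbc hr
        have h2 : tc b c x ∈ G E := mem_rot E hxb hbc hxc h1
        have h3 : tc b c a ∈ G E :=
          tc_extend hE hbc (Ne.symm hxc) (Ne.symm hxb) h2 hadj.symm hab hac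
        rw [tc_rot' hab hbc hac]
        exact h3

lemma tc_component {a b c : V} (hab : a ≠ b) (hbc : b ≠ c) (hac : a ≠ c)
    (hrab : (underlyingGraph E).Reachable a b) (hrac : (underlyingGraph E).Reachable a c) :
    tc a b c ∈ G E := by
  have hr : (underlyingGraph E).Reachable b c := hrab.symm.trans hrac
  obtain ⟨p⟩ := hrab
  exact tc_reach hE p hab hac hbc hr

omit hE

section GoodPart
variable [Fintype V]

open scoped Classical in
def Good (E : Set (Finset V)) (g : Equiv.Perm V) : Prop :=
  ∃ hg : ∀ v, (underlyingGraph E).Reachable v (g v),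
    ∀ v : V, Equiv.Perm.sign
      (g.subtypePerm (p := fun x => (underlyingGraph E).Reachable v x)
        (fun x => ⟨fun hvgx => hvgx.trans (hg x).symm, fun hvx => hvx.trans (hg x)⟩)) = 1

open scoped Classical in
lemma subtypePerm_swap {p : V → Prop} {a b : V} (ha : p a) (hb : p b)
    (h : ∀ x, p (Equiv.swap a b x) ↔ p x) :
    (Equiv.swap a b).subtypePerm h = Equiv.swap (⟨a, ha⟩ : {x // p x}) ⟨b, hb⟩ := by
  ext x
  obtain ⟨x, hx⟩ := x
  simp only [Equiv.Perm.subtypePerm_apply]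
  by_cases hxa : x = a
  · subst hxa
    have e1 : (⟨x, hx⟩ : {t // p t}) = ⟨x, ha⟩ := rfl
    rw [e1, Equiv.swap_apply_left, Equiv.swap_apply_left]
  · by_cases hxb : x = b
    · subst hxb
      have e1 : (⟨x, hx⟩ : {t // p t}) = ⟨x, hb⟩ := rfl
      rw [e1, Equiv.swap_apply_right, Equiv.swap_apply_right]
    · have n1 : (⟨x, hx⟩ : {t // p t}) ≠ ⟨a, ha⟩ := fun hq => hxa (congrArg Subtype.val hq)
      have n2 : (⟨x, hx⟩ : {t // p t}) ≠ ⟨b, hb⟩ := fun hq => hxb (congrArg Subtype.val hq)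
      rw [Equiv.swap_apply_of_ne_of_ne hxa hxb, Equiv.swap_apply_of_ne_of_ne n1 n2]

open scoped Classical in
lemma sign_subtypePerm_tc {p : V → Prop} [Fintype {x // p x}]
    {a b c : V} (hab : a ≠ b) (hbc : b ≠ c) (hac : a ≠ c)
    (ha : p a) (hb : p b) (hc : p c) (H : ∀ x, p (tc a b c x) ↔ p x) :
    Equiv.Perm.sign ((tc a b c).subtypePerm H) = 1 := by
  have h1 : ∀ x, p (Equiv.swap a b x) ↔ p x := by
    intro x
    by_cases hxa : x = a
    · subst hxa; rw [Equiv.swap_apply_left]; exact iff_of_true hb ha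
    · by_cases hxb : x = b
      · subst hxb; rw [Equiv.swap_apply_right]; exact iff_of_true ha hb
      · rw [Equiv.swap_apply_of_ne_of_ne hxa hxb]
  have h2 : ∀ x, p (Equiv.swap b c x) ↔ p x := by
    intro x
    by_cases hxb : x = b
    · subst hxb; rw [Equiv.swap_apply_left]; exact iff_of_true hc hb
    · by_cases hxc : x = c
      · subst hxc; rw [Equiv.swap_apply_right]; exact iff_of_true hb hc
      · rw [Equiv.swap_apply_of_ne_of_ne hxb hxc]
  have key : (tc a b c).subtypePerm H =
      (Equiv.swap a b).subtypePerm h1 * (Equiv.swap b c).subtypePerm h2 := rfl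
  have n1 : (⟨a, ha⟩ : {x // p x}) ≠ ⟨b, hb⟩ := fun hq => hab (congrArg Subtype.val hq)
  have n2 : (⟨b, hb⟩ : {x // p x}) ≠ ⟨c, hc⟩ := fun hq => hbc (congrArg Subtype.val hq)
  rw [key, subtypePerm_swap ha hb h1, subtypePerm_swap hb hc h2, map_mul,
    Equiv.Perm.sign_swap n1, Equiv.Perm.sign_swap n2]
  decide

open scoped Classical in
lemma sign_subtypePerm_of_fixed {p : V → Prop} [Fintype {x // p x}]
    (g : Equiv.Perm V)
    (H : ∀ x, p (g x) ↔ p x) (hfix : ∀ x, p x → g x = x) :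
    Equiv.Perm.sign (g.subtypePerm H) = 1 := by
  have key : g.subtypePerm H = 1 := by
    ext x
    obtain ⟨x, hx⟩ := x
    simpa using hfix x hx
  rw [key, map_one]

open scoped Classical in
lemma good_one : Good E (1 : Equiv.Perm V) := by
  refine ⟨fun v => SimpleGraph.Reachable.refl _, fun v => ?_⟩
  exact sign_subtypePerm_of_fixed _ _ (fun x _ => rfl)

open scoped Classical in
lemma good_mul {x y : Equiv.Perm V} (hx : Good E x) (hy : Good E y) : Good E (x * y) := by
  obtain ⟨hgx, hsx⟩ := hx
  obtain ⟨hgy, hsy⟩ := hy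
  refine ⟨fun v => (hgy v).trans (hgx (y v)), fun v => ?_⟩
  have key : (x * y).subtypePerm (p := fun t => (underlyingGraph E).Reachable v t)
      (fun t => ⟨fun hvgt => hvgt.trans ((hgy t).trans (hgx (y t))).symm,
        fun hvt => hvt.trans ((hgy t).trans (hgx (y t)))⟩) =
      x.subtypePerm (p := fun t => (underlyingGraph E).Reachable v t)
        (fun t => ⟨fun hvgt => hvgt.trans (hgx t).symm, fun hvt => hvt.trans (hgx t)⟩) *
      y.subtypePerm (p := fun t => (underlyingGraph E).Reachable v t)
        (fun t => ⟨fun hvgt => hvgt.trans (hgy t).symm, fun hvt => hvt.trans (hgy t)⟩) := rfl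
  refine (congrArg _ key).trans ?_
  rw [map_mul, hsx v, hsy v, one_mul]

open scoped Classical in
lemma good_inv {x : Equiv.Perm V} (hx : Good E x) : Good E x⁻¹ := by
  obtain ⟨hgx, hsx⟩ := hx
  have hg' : ∀ v, (underlyingGraph E).Reachable v (x⁻¹ v) := by
    intro v
    have h := hgx (x⁻¹ v)
    rw [show x (x⁻¹ v) = v from x.apply_symm_apply v] at h
    exact h.symm
  refine ⟨hg', fun v => ?_⟩
  have key : x⁻¹.subtypePerm (p := fun t => (underlyingGraph E).Reachable v t)
      (fun t => ⟨fun hvgt => hvgt.trans (hg' t).symm, fun hvt => hvt.trans (hg' t)⟩) =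
      (x.subtypePerm (p := fun t => (underlyingGraph E).Reachable v t)
        (fun t => ⟨fun hvgt => hvgt.trans (hgx t).symm, fun hvt => hvt.trans (hgx t)⟩))⁻¹ := rfl
  refine (congrArg _ key).trans ?_
  rw [map_inv, hsx v, inv_one]

open scoped Classical in
lemma good_gen {s : Equiv.Perm V} (hs : s ∈ genS E) : Good E s := by
  obtain ⟨a, b, c, hab, hbc, hac, hmem, rfl⟩ := hs
  have hadj_ab : (underlyingGraph E).Adj a b := ⟨hab, {a, b, c}, hmem, by simp, by simp⟩
  have hadj_bc : (underlyingGraph E).Adj b c := ⟨hbc, {a, b, c}, hmem, by simp, by simp⟩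
  have hadj_ac : (underlyingGraph E).Adj a c := ⟨hac, {a, b, c}, hmem, by simp, by simp⟩
  have hg : ∀ v, (underlyingGraph E).Reachable v (tc a b c v) := by
    intro v
    by_cases hva : v = a
    · subst hva; rw [tc_apply_a hab hac]; exact hadj_ab.reachable
    · by_cases hvb : v = b
      · subst hvb; rw [tc_apply_b hbc hac]; exact hadj_bc.reachable
      · by_cases hvc : v = c
        · subst hvc; rw [tc_apply_c]; exact hadj_ac.symm.reachable
        · rw [tc_apply_ne hva hvb hvc]
  refine ⟨hg, fun v => ?_⟩
  by_cases hva : (underlyingGraph E).Reachable v a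
  · exact sign_subtypePerm_tc hab hbc hac hva (hva.trans hadj_ab.reachable)
      (hva.trans hadj_ac.reachable) _
  · apply sign_subtypePerm_of_fixed
    intro x hx
    have hxa : x ≠ a := fun h' => hva (h' ▸ hx)
    have hxb : x ≠ b := fun h' => hva ((h' ▸ hx).trans hadj_ab.symm.reachable)
    have hxc : x ≠ c := fun h' => hva ((h' ▸ hx).trans hadj_ac.symm.reachable)
    exact tc_apply_ne hxa hxb hxc

open scoped Classical in
lemma good_of_mem {g : Equiv.Perm V} (h : g ∈ G E) : Good E g := by
  induction h using Subgroup.closure_induction with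
  | mem x hx => exact good_gen hx
  | one => exact good_one
  | mul x y hx hy hgx hgy => exact good_mul hgx hgy
  | inv x hx hgx => exact good_inv hgx

open scoped Classical in
lemma mem_of_good (hE : ∀ e ∈ E, e.card = 3) :
    ∀ (g : Equiv.Perm V), Good E g → g ∈ G E := by
  suffices H : ∀ (n : ℕ) (g : Equiv.Perm V), g.support.card = n → Good E g → g ∈ G E by
    exact fun g hg => H _ g rfl hg
  intro n
  induction n using Nat.strong_induction_on with
  | _ n ih =>
    intro g hn hGood
    by_cases hg1 : g = 1
    · exact hg1 ▸ one_mem _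
    · obtain ⟨hg, hsign⟩ := hGood
      obtain ⟨a, ha⟩ : ∃ a, g a ≠ a := by
        by_contra h'
        push_neg at h'
        exact hg1 (Equiv.ext h')
      have hab : a ≠ g a := fun h' => ha h'.symm
      have hrab : (underlyingGraph E).Reachable a (g a) := hg a
      by_cases hba : g (g a) = a
      · -- g swaps a and g a; use evenness to find a third moved point
        obtain ⟨x, hrax, hxa, hxb, hgx⟩ :
            ∃ x, (underlyingGraph E).Reachable a x ∧ x ≠ a ∧ x ≠ g a ∧ g x ≠ x := by
          by_contra hcon
          push_neg at hcon
          have key : g.subtypePerm (p := fun t => (underlyingGraph E).Reachable a t)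
              (fun t => ⟨fun hvgt => hvgt.trans (hg t).symm, fun hvt => hvt.trans (hg t)⟩) =
              Equiv.swap ⟨a, SimpleGraph.Reachable.refl a⟩ ⟨g a, hg a⟩ := by
            ext t
            obtain ⟨t, ht⟩ := t
            simp only [Equiv.Perm.subtypePerm_apply]
            by_cases hta : t = a
            · subst hta
              have e1 : (⟨t, ht⟩ : {s // (underlyingGraph E).Reachable t s}) =
                  ⟨t, SimpleGraph.Reachable.refl t⟩ := rfl
              rw [e1, Equiv.swap_apply_left]
            · by_cases htb : t = g a
              · subst htb
                have e1 : (⟨g a, ht⟩ : {s // (underlyingGraph E).Reachable a s}) =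
                    ⟨g a, hg a⟩ := rfl
                rw [e1, Equiv.swap_apply_right]
                exact hba
              · have n1 : (⟨t, ht⟩ : {s // (underlyingGraph E).Reachable a s}) ≠
                    ⟨a, SimpleGraph.Reachable.refl a⟩ := fun hq => hta (congrArg Subtype.val hq)
                have n2 : (⟨t, ht⟩ : {s // (underlyingGraph E).Reachable a s}) ≠
                    ⟨g a, hg a⟩ := fun hq => htb (congrArg Subtype.val hq)
                rw [Equiv.swap_apply_of_ne_of_ne n1 n2]
                exact hcon t ht hta htb
          have hs := hsign a
          rw [key, Equiv.Perm.sign_swap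
            (fun hq => hab (congrArg Subtype.val hq))] at hs
          exact absurd hs (by decide)
        -- t := tc a x (g a)
        have ht : tc a x (g a) ∈ G E :=
          tc_component hE hxa.symm hxb hab hrax hrab
        have htg : Good E (tc a x (g a) * g) :=
          good_mul (good_of_mem (ht)) ⟨hg, hsign⟩
        have hfix : (tc a x (g a) * g) a = a := by
          rw [Equiv.Perm.mul_apply, tc_apply_c]
        have hsub : (tc a x (g a) * g).support ⊆ g.support := by
          intro y hy
          rw [Equiv.Perm.mem_support] at hy ⊢
          by_contra hyg
          apply hy
          rw [Equiv.Perm.mul_apply, hyg]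
          have hya : y ≠ a := fun h' => ha (h' ▸ hyg)
          have hyx : y ≠ x := fun h' => hgx (h' ▸ hyg)
          have hyb : y ≠ g a := by
            intro h'
            rw [h'] at hyg
            rw [hba] at hyg
            exact hab hyg
          exact tc_apply_ne hya hyx hyb
        have hss : (tc a x (g a) * g).support ⊂ g.support :=
          (Finset.ssubset_iff_of_subset hsub).mpr
            ⟨a, Equiv.Perm.mem_support.mpr ha, by rw [Equiv.Perm.mem_support, not_not]; exact hfix⟩
        have hlt : (tc a x (g a) * g).support.card < n := hn ▸ Finset.card_lt_card hss
        have hmem : tc a x (g a) * g ∈ G E := ih _ hlt _ rfl htg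
        have hrw : g = (tc a x (g a))⁻¹ * (tc a x (g a) * g) := (inv_mul_cancel_left _ _).symm
        rw [hrw]
        exact mul_mem (inv_mem ht) hmem
      · -- c := g (g a) distinct from a and g a
        have hcb : g (g a) ≠ g a := fun h' => ha (g.injective h')
        have hrac : (underlyingGraph E).Reachable a (g (g a)) := (hg a).trans (hg (g a))
        have ht : tc a (g (g a)) (g a) ∈ G E :=
          tc_component hE (fun h' => hba h'.symm) hcb hab hrac hrab
        have htg : Good E (tc a (g (g a)) (g a) * g) :=
          good_mul (good_of_mem ht) ⟨hg, hsign⟩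
        have hfix : (tc a (g (g a)) (g a) * g) a = a := by
          rw [Equiv.Perm.mul_apply, tc_apply_c]
        have hsub : (tc a (g (g a)) (g a) * g).support ⊆ g.support := by
          intro y hy
          rw [Equiv.Perm.mem_support] at hy ⊢
          by_contra hyg
          apply hy
          rw [Equiv.Perm.mul_apply, hyg]
          have hya : y ≠ a := fun h' => ha (h' ▸ hyg)
          have hyc : y ≠ g (g a) := fun h' => hcb (g.injective (h' ▸ hyg))
          have hyb : y ≠ g a := fun h' => hab (g.injective (h' ▸ hyg)).symm
          exact tc_apply_ne hya hyc hyb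
        have hss : (tc a (g (g a)) (g a) * g).support ⊂ g.support :=
          (Finset.ssubset_iff_of_subset hsub).mpr
            ⟨a, Equiv.Perm.mem_support.mpr ha, by rw [Equiv.Perm.mem_support, not_not]; exact hfix⟩
        have hlt : (tc a (g (g a)) (g a) * g).support.card < n := hn ▸ Finset.card_lt_card hss
        have hmem : tc a (g (g a)) (g a) * g ∈ G E := ih _ hlt _ rfl htg
        have hrw : g = (tc a (g (g a)) (g a))⁻¹ * (tc a (g (g a)) (g a) * g) :=
          (inv_mul_cancel_left _ _).symm
        rw [hrw]
        exact mul_mem (inv_mem ht) hmem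

end GoodPart

end Stmt10Aux

open scoped Classical in
/-- the subgroup of `Sym(V)` generated by the `3`-cycles `(a b c)` over the
hyperedges `{a,b,c} ∈ E` of a `3`-uniform hypergraph equals the set of permutations that move
every vertex within its connected component of the underlying graph and restrict to an even
permutation of each connected component. -/
theorem stmt10 {V : Type*} [Fintype V] [DecidableEq V] (E : Set (Finset V))
    (hE : ∀ e ∈ E, e.card = 3) (g : Equiv.Perm V) :
    g ∈ Subgroup.closure {s : Equiv.Perm V | ∃ a b c : V,
        a ≠ b ∧ b ≠ c ∧ a ≠ c ∧ ({a, b, c} : Finset V) ∈ E ∧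
        s = Equiv.swap a b * Equiv.swap b c} ↔
      ∃ hg : ∀ v, (underlyingGraph E).Reachable v (g v),
        ∀ v : V, Equiv.Perm.sign
          (g.subtypePerm (p := fun x => (underlyingGraph E).Reachable v x)
            (fun x => ⟨fun hvgx => hvgx.trans (hg x).symm, fun hvx => hvx.trans (hg x)⟩)) = 1 := by
  constructor
  · intro h
    exact Stmt10Aux.good_of_mem (E := E) h
  · intro h
    exact Stmt10Aux.mem_of_good hE g h
end

section
/- Let A be a finite set and n ≥ 1. Then the group of conservative permutations of A^n equals the subgroup of Sym(A^n) generated by the transpositions (x·a·b·y x·b·a·y) exchanging a word x·a·b·y with the word x·b·a·y obtained by swapping two adjacent symbols (a, b ∈ A distinct, x, y words with |x|+|y| = n−2). -/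
/-- The weight of a word `x ∈ A^n`: the number of occurrences of each symbol. -/
def weight {A : Type*} [DecidableEq A] {n : ℕ} (x : Fin n → A) : A → ℕ :=
  fun a => (Finset.univ.filter fun i => x i = a).card

/-- A permutation of `A^n` is conservative if it preserves weights. -/
def IsConservative {A : Type*} [DecidableEq A] {n : ℕ} (f : Equiv.Perm (Fin n → A)) : Prop :=
  ∀ x, weight (f x) = weight x

/-- One move swapping the symbols in two adjacent coordinates. -/
def adjSwapStep {A : Type*} {n : ℕ} (u v : Fin n → A) : Prop :=
  ∃ (i : Fin n) (hi : (i : ℕ) + 1 < n),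
    v = u ∘ (Equiv.swap i ⟨(i : ℕ) + 1, hi⟩)

section aux
variable {A : Type*} [DecidableEq A] {n : ℕ}

lemma weight_eq_count (u : Fin n → A) (a : A) :
    weight u a = Multiset.count a (Multiset.map u Finset.univ.val) := by
  rw [Multiset.count_map]
  simp only [weight, Finset.card_filter]
  simp [Finset.filter, eq_comm, Multiset.countP_eq_card_filter]

lemma weight_eq_iff {u v : Fin n → A} :
    weight u = weight v ↔ Multiset.map u Finset.univ.val = Multiset.map v Finset.univ.val := by
  constructor
  · intro h
    ext a
    rw [← weight_eq_count, ← weight_eq_count, h]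
  · intro h
    funext a
    rw [weight_eq_count, weight_eq_count, h]

lemma weight_comp (u : Fin n → A) (σ : Equiv.Perm (Fin n)) :
    weight (u ∘ σ) = weight u := by
  rw [weight_eq_iff]
  have : Finset.univ.val.map ⇑σ = Finset.univ.val := by
    have := Finset.map_univ_equiv σ
    calc Finset.univ.val.map ⇑σ = (Finset.univ.map σ.toEmbedding).val := by
          rw [Finset.map_val]; rfl
      _ = Finset.univ.val := by rw [this]
  calc Multiset.map (u ∘ ⇑σ) Finset.univ.val
      = Multiset.map u (Finset.univ.val.map ⇑σ) := by rw [Multiset.map_map]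
    _ = Multiset.map u Finset.univ.val := by rw [this]

lemma exists_comp_perm [Fintype A] {u v : Fin n → A} (h : weight u = weight v) :
    ∃ σ : Equiv.Perm (Fin n), v = u ∘ σ := by
  letI : LinearOrder A := LinearOrder.lift' (Fintype.equivFin A) (Fintype.equivFin A).injective
  have hm : Multiset.map u Finset.univ.val = Multiset.map v Finset.univ.val := weight_eq_iff.mp h
  have hcoe : ∀ w : Fin n → A, ((List.ofFn w : List A) : Multiset A)
      = Multiset.map w Finset.univ.val := by
    intro w
    rw [List.ofFn_eq_map, Fin.univ_def]
    simp
  have hp : List.Perm (List.ofFn u) (List.ofFn v) := by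
    rw [← Multiset.coe_eq_coe, hcoe, hcoe, hm]
  have key : u ∘ Tuple.sort u = v ∘ Tuple.sort v := by
    apply List.ofFn_injective
    exact List.Perm.eq_of_sortedLE
      (Tuple.monotone_sort u).sortedLE_ofFn (Tuple.monotone_sort v).sortedLE_ofFn
      (((Tuple.sort u).ofFn_comp_perm u).trans (hp.trans ((Tuple.sort v).ofFn_comp_perm v).symm))
  refine ⟨Tuple.sort u * (Tuple.sort v)⁻¹, funext fun i => ?_⟩
  have := congrFun key ((Tuple.sort v)⁻¹ i)
  simp only [Function.comp_apply, Equiv.Perm.inv_def, Equiv.apply_symm_apply] at this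
  simp [Function.comp_apply, Equiv.Perm.mul_apply, ← this]

lemma reflTransGen_of_perm (hn : 1 ≤ n) (σ : Equiv.Perm (Fin n)) (u : Fin n → A) :
    Relation.ReflTransGen adjSwapStep u (u ∘ σ) := by
  obtain ⟨m, rfl⟩ : ∃ m, n = m + 1 := ⟨n - 1, (Nat.succ_pred_eq_of_pos hn).symm⟩
  have hσ : σ ∈ Submonoid.closure
      (Set.range fun i : Fin m ↦ Equiv.swap i.castSucc i.succ) := by
    rw [Equiv.Perm.mclosure_swap_castSucc_succ]; trivial
  induction hσ using Submonoid.closure_induction generalizing u with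
  | mem s hs =>
    obtain ⟨i, rfl⟩ := hs
    refine Relation.ReflTransGen.single ⟨i.castSucc, ?_, ?_⟩
    · simpa using i.isLt
    · have h2 : (⟨((i.castSucc : Fin (m+1)) : ℕ) + 1, by simpa using i.isLt⟩ : Fin (m+1))
          = i.succ := by ext; simp
      rw [h2]
  | one =>
    have : u ∘ ⇑(1 : Equiv.Perm (Fin (m+1))) = u := by funext j; simp
    rw [this]
  | mul a b _ _ ha hb =>
    have : u ∘ ⇑(a * b) = (u ∘ ⇑a) ∘ ⇑b := by funext i; simp [Equiv.Perm.mul_apply]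
    rw [this]
    exact (ha u).trans (hb (u ∘ ⇑a))

end aux

/-- the group of conservative permutations of `A^n` is exactly the subgroup of
`Sym(A^n)` generated by the transpositions of pairs of words differing by a swap of two
distinct adjacent symbols. -/
theorem stmt13 (A : Type*) [Fintype A] [DecidableEq A] (n : ℕ) (hn : 1 ≤ n)
    (f : Equiv.Perm (Fin n → A)) :
    IsConservative f ↔
      f ∈ Subgroup.closure {s : Equiv.Perm (Fin n → A) | ∃ u v : Fin n → A,
        adjSwapStep u v ∧ u ≠ v ∧ s = Equiv.swap u v} := by
  set S : Set (Equiv.Perm (Fin n → A)) := {s | ∃ u v : Fin n → A,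
      adjSwapStep u v ∧ u ≠ v ∧ s = Equiv.swap u v} with hS
  have hweight_step : ∀ u v : Fin n → A, adjSwapStep u v → weight v = weight u := by
    rintro u v ⟨i, hi, rfl⟩
    exact weight_comp u _
  have hSswap : ∀ s ∈ S, Equiv.Perm.IsSwap s := by
    rintro s ⟨u, v, _, huv, rfl⟩
    exact ⟨u, v, huv, rfl⟩
  have hScons : ∀ s ∈ S, IsConservative s := by
    rintro s ⟨u, v, hstep, huv, rfl⟩ x
    rcases eq_or_ne x u with rfl | hxu
    · rw [Equiv.swap_apply_left]; exact hweight_step _ _ hstep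
    rcases eq_or_ne x v with rfl | hxv
    · rw [Equiv.swap_apply_right]; exact (hweight_step _ _ hstep).symm
    · rw [Equiv.swap_apply_of_ne_of_ne hxu hxv]
  constructor
  · intro hf
    rw [mem_closure_isSwap hSswap]
    refine ⟨Set.toFinite _, fun x => ?_⟩
    have hw : weight x = weight (f x) := (hf x).symm
    obtain ⟨σ, hσ⟩ := exists_comp_perm hw
    have key : ∀ y, Relation.ReflTransGen adjSwapStep x y →
        y ∈ MulAction.orbit (Subgroup.closure S) x := by
      intro y hpath
      induction hpath with
      | refl => exact MulAction.mem_orbit_self x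
      | tail _ hbc ih =>
        rename_i b c _
        rcases eq_or_ne b c with rfl | hbc'
        · exact ih
        obtain ⟨g, hg⟩ := ih
        have hmem : Equiv.swap b c ∈ Subgroup.closure S :=
          Subgroup.subset_closure ⟨b, c, hbc, hbc', rfl⟩
        refine ⟨⟨Equiv.swap b c, hmem⟩ * g, ?_⟩
        show (Equiv.swap b c) (g • x) = c
        have hg' : g • x = b := hg
        rw [hg', Equiv.swap_apply_left]
    exact key _ (by rw [hσ]; exact reflTransGen_of_perm hn σ x)
  · intro hf
    have : Subgroup.closure S ≤ {
        carrier := {g | IsConservative g}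
        one_mem' := fun x => rfl
        mul_mem' := by
          intro a b ha hb x
          exact (ha (b x)).trans (hb x)
        inv_mem' := by
          intro a ha x
          have := ha (a⁻¹ x)
          rw [Equiv.Perm.inv_def, Equiv.apply_symm_apply] at this
          exact this.symm } := by
      rw [Subgroup.closure_le]
      exact hScons
    exact this hf
end
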